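/- arXiv:1410.5993 — 4 statements merged into one kernel-verified Lean document; each statement's English description precedes it below -/
import Mathlib

section
/- For every finite set S and every partial order ≤_S on S, setting k = ⌈log₂(|S|+1)⌉, there exist families (ℱ_s)_{s∈S} and (𝒢_s)_{s∈S} of sets of k-ary Boolean functions such that for all s,t ∈ S: (1) ML⁺(ℱ_s) ≤_expr ML⁺(ℱ_t) if and only if ML⁺(𝒢_s) ≤_poly ML⁺(𝒢_t) if and only if s ≤_S t; (2) all logics ML⁺(𝒢_s) are equally expressive, and if s ≰_S t then ML⁺(𝒢_s) is exponentially more succinct than ML⁺(𝒢_t). -/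
set_option autoImplicit false
attribute [local instance] Classical.propDecidable

/-- A Kripke model with `n` modalities: a nonempty set of worlds, `n` accessibility
relations, and a propositional assignment (variables are indexed by `ℕ`). -/
structure KripkeModel (n : ℕ) : Type 1 where
  W : Type
  nonempty : Nonempty W
  R : Fin n → W → W → Prop
  val : ℕ → Set W

/-- A pointed Kripke model. -/
structure PointedModel (n : ℕ) : Type 1 where
  M : KripkeModel n
  w : M.W

/-- Successor selection functions of arity `n`. -/
def SSF (n : ℕ) : Type 1 :=
  (M : KripkeModel n) → M.W → Set M.W

/-- Formulas of the modal logic `ML⁺(𝒪)` for a set `𝒪` of successor selection functions. -/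
inductive MLFormula {n : ℕ} (Os : Set (SSF n)) : Type 1 where
  | var : ℕ → MLFormula Os
  | neg : MLFormula Os → MLFormula Os
  | or : MLFormula Os → MLFormula Os → MLFormula Os
  | box : Os → MLFormula Os → MLFormula Os

/-- Size of a formula: number of nodes of its syntax tree. -/
def MLFormula.size {n : ℕ} {Os : Set (SSF n)} : MLFormula Os → ℕ
  | .var _ => 1
  | .neg φ => φ.size + 1
  | .or φ ψ => φ.size + ψ.size + 1
  | .box _ φ => φ.size + 1

/-- Satisfaction of an `ML⁺(𝒪)` formula in a pointed model. -/
def Satisfies {n : ℕ} {Os : Set (SSF n)} (M : KripkeModel n) : M.W → MLFormula Os → Prop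
  | w, .var p => w ∈ M.val p
  | w, .neg φ => ¬ Satisfies M w φ
  | w, .or φ ψ => Satisfies M w φ ∨ Satisfies M w ψ
  | w, .box O φ => ∀ w' ∈ O.val M w, Satisfies M w' φ

/-- Two formulas (of possibly different logics) are equivalent if they are satisfied
by exactly the same pointed models. -/
def FEquiv {n : ℕ} {Os₁ Os₂ : Set (SSF n)} (φ : MLFormula Os₁) (ψ : MLFormula Os₂) : Prop :=
  ∀ (M : KripkeModel n) (w : M.W), Satisfies M w φ ↔ Satisfies M w ψ

/-- `ML⁺(𝒪₂)` is at least as expressive as `ML⁺(𝒪₁)`. -/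
def LeExpr {n : ℕ} (Os₁ Os₂ : Set (SSF n)) : Prop :=
  ∀ φ : MLFormula Os₁, ∃ ψ : MLFormula Os₂, FEquiv φ ψ

/-- `ML⁺(𝒪₂)` is at least as succinct as `ML⁺(𝒪₁)`: there is a fixed polynomial `p` such
that every `ML⁺(𝒪₁)`-formula has an equivalent `ML⁺(𝒪₂)`-formula of polynomially bounded size. -/
def LePoly {n : ℕ} (Os₁ Os₂ : Set (SSF n)) : Prop :=
  ∃ p : Polynomial ℕ, ∀ φ : MLFormula Os₁, ∃ ψ : MLFormula Os₂,
    FEquiv φ ψ ∧ ψ.size ≤ p.eval φ.size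

def EquallyExpressive {n : ℕ} (Os₁ Os₂ : Set (SSF n)) : Prop :=
  LeExpr Os₁ Os₂ ∧ LeExpr Os₂ Os₁

/-- `ML⁺(𝒪₁)` is exponentially more succinct than `ML⁺(𝒪₂)`: there is a sequence of
`ML⁺(𝒪₁)`-formulas of linearly bounded size and some `c > 1` such that every equivalent
`ML⁺(𝒪₂)`-formula of the `i`-th formula has size at least `c ^ i`. -/
def ExpMoreSuccinct {n : ℕ} (Os₁ Os₂ : Set (SSF n)) : Prop :=
  ∃ (φ : ℕ → MLFormula Os₁) (a b : ℕ) (c : ℝ), 1 < c ∧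
    (∀ i : ℕ, (φ i).size ≤ a * i + b) ∧
    ∀ (i : ℕ) (ψ : MLFormula Os₂), FEquiv (φ i) ψ → c ^ i ≤ ((ψ.size : ℕ) : ℝ)

/-- The successor selection function given by an `n`-ary Boolean function `f`:
it selects the `f`-successors. -/
noncomputable def OfBool {n : ℕ} (f : (Fin n → Bool) → Bool) : SSF n :=
  fun M w => {w' | f (fun j => decide (M.R j w w')) = true}

/-- The set of successor selection functions given by a set of `n`-ary Boolean functions. -/
def boolSSFs {n : ℕ} (F : Set ((Fin n → Bool) → Bool)) : Set (SSF n) :=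
  OfBool '' F

/-- `sSucc M s w w'` : `w'` is an `s`-successor of `w` in `M`. -/
def sSucc {n : ℕ} (M : KripkeModel n) : List (Fin n) → M.W → M.W → Prop
  | [], w, w' => w' = w
  | a :: s, w, w' => ∃ u, M.R a w u ∧ sSucc M s u w'

/-- The successor selection function given by a language `L`: it selects all
`s`-successors for words `s ∈ L`. -/
def OfLang {n : ℕ} (L : Set (List (Fin n))) : SSF n :=
  fun M w => {w' | ∃ s ∈ L, sSucc M s w w'}

/-- The set of successor selection functions given by a set of languages. -/
def langSSFs {n : ℕ} (Ls : Set (Set (List (Fin n)))) : Set (SSF n) :=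
  OfLang '' Ls

/-- The operators of standard multimodal logic `ML_n`: the singleton one-letter languages. -/
def MLn_ops (n : ℕ) : Set (SSF n) := {O | ∃ j : Fin n, O = OfLang {[j]}}

/-- `nestBoxes s φ` is the formula `□_{s₁}□_{s₂}…□_{s_k} φ`. -/
def nestBoxes {n : ℕ} : List (Fin n) → MLFormula (MLn_ops n) → MLFormula (MLn_ops n)
  | [], φ => φ
  | j :: s, φ => .box ⟨OfLang {[j]}, ⟨j, rfl⟩⟩ (nestBoxes s φ)

/-! ### Alternation languages (alphabet {1,2} represented as `Fin 2`, letter `0` ↦ 1, `1` ↦ 2) -/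

/-- The (0-based) `j`-th letter of the alternating word starting with letter `b`. -/
def altLetter (b : Fin 2) (j : ℕ) : Fin 2 := if j % 2 = 0 then b else b + 1

/-- The alternating word of length `ℓ` starting with letter `b`. -/
def altWord (b : Fin 2) (ℓ : ℕ) : List (Fin 2) := (List.range ℓ).map (altLetter b)

/-- The alternation language `A_ℓ` of length `ℓ`. -/
def altLang (ℓ : ℕ) : Set (List (Fin 2)) := {altWord 0 ℓ, altWord 1 ℓ}

/-- Operators of the logic `ML_A(I)`. -/
def MLA_ops (I : Set ℕ) : Set (SSF 2) := (fun ℓ => OfLang (altLang ℓ)) '' I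

/-- Operators of the logic `ML_A⁺(I)` (alternation operators plus the classical boxes). -/
def MLAp_ops (I : Set ℕ) : Set (SSF 2) :=
  MLA_ops I ∪ {OfLang {[(0 : Fin 2)]}, OfLang {[(1 : Fin 2)]}}

/-- The formula `[A_ℓ]^i p` (where `p` is the fixed propositional variable `0`),
as a formula of `ML_A({ℓ})`. -/
def boxAltIter (ℓ : ℕ) : ℕ → MLFormula (MLA_ops {ℓ})
  | 0 => .var 0
  | i + 1 => .box ⟨OfLang (altLang ℓ), ⟨ℓ, rfl, rfl⟩⟩ (boxAltIter ℓ i)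

/-! ### Formula size games -/

/-- The class `{(M,w') | (M,w) ∈ C, w' ∈ O(M,w)}` used in the box move. -/
def boxImage {n : ℕ} (O : SSF n) (C : Set (PointedModel n)) : Set (PointedModel n) :=
  {q | ∃ m ∈ C, ∃ w' ∈ O m.M m.w, q = ⟨m.M, w'⟩}

/-- Closed game trees of the formula size game `FSG(𝒪)`, with root label `⟨C∘D⟩`.
Each constructor corresponds to a legal Spoiler move; leaves are atomic moves. -/
inductive GameTree {n : ℕ} (Os : Set (SSF n)) :
    Set (PointedModel n) → Set (PointedModel n) → Type 1 where
  | atom (p : ℕ) (C D : Set (PointedModel n))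
      (hC : ∀ q ∈ C, q.w ∈ q.M.val p) (hD : ∀ q ∈ D, q.w ∉ q.M.val p) :
      GameTree Os C D
  | not (C D : Set (PointedModel n)) (t : GameTree Os D C) : GameTree Os C D
  | or (C₁ C₂ D : Set (PointedModel n))
      (t₁ : GameTree Os C₁ D) (t₂ : GameTree Os C₂ D) : GameTree Os (C₁ ∪ C₂) D
  | box (O : SSF n) (hO : O ∈ Os) (C D D₁ : Set (PointedModel n))
      (hD : ∀ q ∈ D, ∃ w' ∈ O q.M q.w, (⟨q.M, w'⟩ : PointedModel n) ∈ D₁)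
      (t : GameTree Os (boxImage O C) D₁) : GameTree Os C D

/-- Number of nodes of a game tree. -/
def gameTreeSize {n : ℕ} {Os : Set (SSF n)} :
    ∀ (C D : Set (PointedModel n)), GameTree Os C D → ℕ
  | _, _, .atom _ _ _ _ _ => 1
  | _, _, .not _ _ t => gameTreeSize _ _ t + 1
  | _, _, .or _ _ _ t₁ t₂ => gameTreeSize _ _ t₁ + gameTreeSize _ _ t₂ + 1
  | _, _, .box _ _ _ _ _ _ t => gameTreeSize _ _ t + 1

/-- `IsSubtree t T bl par` : the root of `t` is a node of `T`; `bl` is the sequence of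
successor selection functions labelling box moves on the path from `T`'s root to this node
(excluding the node's own label), and `par = true` iff the path contains an even number
of `¬`-labels. -/
inductive IsSubtree {n : ℕ} {Os : Set (SSF n)} :
    ∀ {C D A B : Set (PointedModel n)},
      GameTree Os C D → GameTree Os A B → List (SSF n) → Bool → Prop where
  | refl {A B : Set (PointedModel n)} (t : GameTree Os A B) : IsSubtree t t [] true
  | not {C D A B : Set (PointedModel n)} {bl : List (SSF n)} {par : Bool}
      {t : GameTree Os C D} {t' : GameTree Os B A} :
      IsSubtree t t' bl par → IsSubtree t (.not A B t') bl (!par)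
  | orLeft {C D A₁ A₂ B : Set (PointedModel n)} {bl : List (SSF n)} {par : Bool}
      {t : GameTree Os C D} {t₁ : GameTree Os A₁ B} (t₂ : GameTree Os A₂ B) :
      IsSubtree t t₁ bl par → IsSubtree t (.or A₁ A₂ B t₁ t₂) bl par
  | orRight {C D A₁ A₂ B : Set (PointedModel n)} {bl : List (SSF n)} {par : Bool}
      {t : GameTree Os C D} (t₁ : GameTree Os A₁ B) {t₂ : GameTree Os A₂ B} :
      IsSubtree t t₂ bl par → IsSubtree t (.or A₁ A₂ B t₁ t₂) bl par
  | box {C D A B D₁ : Set (PointedModel n)} {bl : List (SSF n)} {par : Bool}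
      {t : GameTree Os C D} (O : SSF n) (hO : O ∈ Os)
      (hD : ∀ q ∈ B, ∃ w' ∈ O q.M q.w, (⟨q.M, w'⟩ : PointedModel n) ∈ D₁)
      {t' : GameTree Os (boxImage O A) D₁} :
      IsSubtree t t' bl par → IsSubtree t (.box O hO A B D₁ hD t') (O :: bl) par

/-! ### The canonical game tree `T^ψ` corresponding to a formula `ψ` -/

/-- Positions (nodes) in the syntax tree of a formula. -/
inductive FPos {n : ℕ} {Os : Set (SSF n)} : MLFormula Os → Type 1 where
  | root (φ : MLFormula Os) : FPos φ
  | negChild {φ : MLFormula Os} : FPos φ → FPos (.neg φ)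
  | orLeft {φ ψ : MLFormula Os} : FPos φ → FPos (.or φ ψ)
  | orRight {φ ψ : MLFormula Os} : FPos ψ → FPos (.or φ ψ)
  | boxChild {O : Os} {φ : MLFormula Os} : FPos φ → FPos (.box O φ)

/-- `nodeData φ v C D` computes, for the node `v` of the closed game tree `T^φ(⟨C∘D⟩)`
obtained by playing the Spoiler strategy corresponding to `φ` on the starting node
`⟨C∘D⟩`, the tuple (left label class, right label class, boxlabels, parity of ¬'s). -/
def nodeData {n : ℕ} {Os : Set (SSF n)} :
    (φ : MLFormula Os) → FPos φ →
      Set (PointedModel n) → Set (PointedModel n) →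
      Set (PointedModel n) × Set (PointedModel n) × List (SSF n) × Bool
  | _, .root _, C, D => (C, D, [], true)
  | .neg φ, .negChild q, C, D =>
      let r := nodeData φ q D C
      (r.1, r.2.1, r.2.2.1, !r.2.2.2)
  | .or φ₁ _, .orLeft q, C, D =>
      nodeData φ₁ q {m ∈ C | Satisfies m.M m.w φ₁} D
  | .or _ φ₂, .orRight q, C, D =>
      nodeData φ₂ q {m ∈ C | Satisfies m.M m.w φ₂} D
  | .box O φ, .boxChild q, C, D =>
      let r := nodeData φ q (boxImage O.val C)
        {m ∈ boxImage O.val D | ¬ Satisfies m.M m.w φ}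
      (r.1, r.2.1, O.val :: r.2.2.1, r.2.2.2)

/-- A position is a leaf of the game tree iff the corresponding subformula is a variable. -/
def isLeafPos {n : ℕ} {Os : Set (SSF n)} : (φ : MLFormula Os) → FPos φ → Prop
  | .var _, .root _ => True
  | .neg _, .root _ => False
  | .or _ _, .root _ => False
  | .box _ _, .root _ => False
  | .neg φ, .negChild q => isLeafPos φ q
  | .or φ _, .orLeft q => isLeafPos φ q
  | .or _ ψ, .orRight q => isLeafPos ψ q
  | .box _ φ, .boxChild q => isLeafPos φ q

/-! ### The models `A*_{ℓ,i}` and `B*_{ℓ,s}` -/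

/-- Extend a string `s ∈ {1,2}^i` to an infinite string (only the first `i` letters matter). -/
def extendStr {i : ℕ} (s : Fin i → Fin 2) : ℕ → Fin 2 :=
  fun d => if h : d < i then s ⟨d, h⟩ else 0

/-- The (0-based) `d`-th letter of the concatenation `a_ℓ^{s 0} a_ℓ^{s 1} …`. -/
def bLetter (ℓ : ℕ) (s : ℕ → Fin 2) (d : ℕ) : Fin 2 :=
  altLetter (s (d / ℓ)) (d % ℓ)

/-- The extended model `B*_{ℓ,s}`: a path of length `i·ℓ` spelling `a^ℓ_s`, a trap world
(`none`) with a 1-loop and a 2-loop where `p` (variable 0) is true, and `j`-edges to the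
trap from every base world lacking a `j`-successor. -/
def Bstar (ℓ i : ℕ) (s : ℕ → Fin 2) : KripkeModel 2 where
  W := Option (Fin (i * ℓ + 1))
  nonempty := ⟨none⟩
  R := fun j x y =>
    match x, y with
    | none, none => True
    | none, some _ => False
    | some d, some d' => (d' : ℕ) = (d : ℕ) + 1 ∧ bLetter ℓ s (d : ℕ) = j
    | some d, none => ¬ (((d : ℕ) < i * ℓ) ∧ bLetter ℓ s (d : ℕ) = j)
  val := fun p => {x | p = 0 ∧ x = none}

/-- The root `w₀^B` of `B*_{ℓ,s}`. -/
def rootB (ℓ i : ℕ) (s : ℕ → Fin 2) : (Bstar ℓ i s).W :=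
  some ⟨0, Nat.succ_pos _⟩

/-- Base worlds of `A*_{ℓ,i}`: a depth `d ≤ i·ℓ` together with the branch (which of the
two alternating words the current segment follows); the branch is normalized to `0` at
the main worlds (depths that are multiples of `ℓ`). -/
def AstarBase (ℓ i : ℕ) : Type :=
  {x : ℕ × Fin 2 // x.1 ≤ i * ℓ ∧ (x.1 % ℓ = 0 → x.2 = 0)}

/-- Edges of the base model `A-base_{ℓ,i}` with label `j`. -/
def AbaseEdge (ℓ : ℕ) (j : Fin 2) (x y : ℕ × Fin 2) : Prop :=
  y.1 = x.1 + 1 ∧ ∃ c : Fin 2, j = altLetter c (x.1 % ℓ) ∧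
    (x.1 % ℓ ≠ 0 → c = x.2) ∧ (y.1 % ℓ ≠ 0 → c = y.2)

/-- The extended model `A*_{ℓ,i}`: between consecutive main worlds there are two disjoint
paths spelling `a_ℓ^1` and `a_ℓ^2`; a trap world (`none`) with a 1-loop and a 2-loop where
`p` is false; `j`-edges to the trap from every base world lacking a `j`-successor.
The variable `p` (variable 0) is true exactly at the final main world `w_i`. -/
def Astar (ℓ i : ℕ) : KripkeModel 2 where
  W := Option (AstarBase ℓ i)
  nonempty := ⟨none⟩
  R := fun j x y =>
    match x, y with
    | none, none => True
    | none, some _ => False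
    | some a, some b => AbaseEdge ℓ j a.val b.val
    | some a, none => ¬ ∃ b : AstarBase ℓ i, AbaseEdge ℓ j a.val b.val
  val := fun p => {x | p = 0 ∧ x = some ⟨(i * ℓ, 0), le_refl _, fun _ => rfl⟩}

/-- The root `w₀^A` of `A*_{ℓ,i}`. -/
def rootA (ℓ i : ℕ) : (Astar ℓ i).W :=
  some ⟨(0, 0), Nat.zero_le _, fun _ => rfl⟩

/-- The class `𝔸_{ℓ,i}`. -/
def classA (ℓ i : ℕ) : Set (PointedModel 2) :=
  {⟨Astar ℓ i, rootA ℓ i⟩}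

/-- The class `𝔹_{ℓ,i}`. -/
def classB (ℓ i : ℕ) : Set (PointedModel 2) :=
  {q | ∃ s : Fin i → Fin 2, q = ⟨Bstar ℓ i (extendStr s), rootB ℓ i (extendStr s)⟩}

/-- A node with label classes `C`, `D` covers the string `s` if one of the classes
contains a pointed model `(B*_{ℓ,s}, w)`. -/
def Covers (ℓ i : ℕ) (C D : Set (PointedModel 2)) (s : Fin i → Fin 2) : Prop :=
  ∃ w : (Bstar ℓ i (extendStr s)).W,
    (⟨Bstar ℓ i (extendStr s), w⟩ : PointedModel 2) ∈ C ∪ D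

/-- The word `a^ℓ_s = a_ℓ^{s₁} a_ℓ^{s₂} … a_ℓ^{s_i}`. -/
def aWord (ℓ : ℕ) {i : ℕ} (s : Fin i → Fin 2) : List (Fin 2) :=
  (List.ofFn fun j => altWord (s j) ℓ).flatten

/-- A language is length-uniform if it is nonempty and all its words have the same length. -/
def LengthUniform (L : Set (List (Fin 2))) : Prop :=
  L.Nonempty ∧ ∃ d : ℕ, ∀ x ∈ L, x.length = d

/-- `‖L‖`: the common word length of a length-uniform language. -/
noncomputable def luLen (L : Set (List (Fin 2))) : ℕ :=
  sInf {d : ℕ | ∃ x ∈ L, x.length = d}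

/-- Concatenation of languages. -/
def langConcat (L₁ L₂ : Set (List (Fin 2))) : Set (List (Fin 2)) :=
  {x | ∃ a ∈ L₁, ∃ b ∈ L₂, x = a ++ b}

/-- `L₁ ∘ L₂ ∘ … ∘ L_m` for a list of languages. -/
def concatList (Ls : List (Set (List (Fin 2)))) : Set (List (Fin 2)) :=
  Ls.foldr langConcat {([] : List (Fin 2))}

/-- `𝒪`-bisimulations. -/
def IsOBisim {n : ℕ} (Os : Set (SSF n)) (M₁ M₂ : KripkeModel n)
    (Z : M₁.W → M₂.W → Prop) : Prop :=
  ∀ w₁ w₂, Z w₁ w₂ →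
    (∀ p : ℕ, w₁ ∈ M₁.val p ↔ w₂ ∈ M₂.val p) ∧
    (∀ O ∈ Os, ∀ w₁' ∈ O M₁ w₁, ∃ w₂' ∈ O M₂ w₂, Z w₁' w₂') ∧
    (∀ O ∈ Os, ∀ w₂' ∈ O M₂ w₂, ∃ w₁' ∈ O M₁ w₁, Z w₁' w₂')

/-! ### Auxiliary development for statement0 -/

section Aux

open MLFormula

/-- The all-false pattern. -/
def zpat (k : ℕ) : Fin k → Bool := fun _ => false

/-- Atom Boolean function: recognizes exactly the pattern `c`. -/
noncomputable def atomFn {k : ℕ} (c : Fin k → Bool) : (Fin k → Bool) → Bool :=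
  fun r => decide (r = c)

/-- Union of two atoms. -/
noncomputable def unionFn {k : ℕ} (x y : Fin k → Bool) : (Fin k → Bool) → Bool :=
  fun r => decide (r = x) || decide (r = y)

/-- Number of variable occurrences in a formula. -/
noncomputable def cnt {n : ℕ} {Os : Set (SSF n)} : MLFormula Os → ℕ
  | .var _ => 1
  | .neg φ => cnt φ
  | .or φ ψ => cnt φ + cnt ψ
  | .box _ φ => cnt φ
termination_by structural φ => φ

lemma cnt_le_size {n : ℕ} {Os : Set (SSF n)} (φ : MLFormula Os) : cnt φ ≤ φ.size := by
  induction φ with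
  | var p => simp [cnt, MLFormula.size]
  | neg φ ih => simp only [cnt, MLFormula.size]; omega
  | or φ ψ ih₁ ih₂ => simp only [cnt, MLFormula.size]; omega
  | box O φ ih => simp only [cnt, MLFormula.size]; omega

/-- Re-tagging a formula along an inclusion of operator sets. -/
noncomputable def reindex {n : ℕ} {Os₁ Os₂ : Set (SSF n)} (h : Os₁ ⊆ Os₂) :
    MLFormula Os₁ → MLFormula Os₂
  | .var p => .var p
  | .neg φ => .neg (reindex h φ)
  | .or φ ψ => .or (reindex h φ) (reindex h ψ)
  | .box O φ => .box ⟨O.1, h O.2⟩ (reindex h φ)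
termination_by structural φ => φ

lemma size_reindex {n : ℕ} {Os₁ Os₂ : Set (SSF n)} (h : Os₁ ⊆ Os₂) :
    ∀ φ : MLFormula Os₁, (reindex h φ).size = φ.size
  | .var _ => rfl
  | .neg φ => by simp only [reindex, MLFormula.size, size_reindex h φ]
  | .or φ ψ => by simp only [reindex, MLFormula.size, size_reindex h φ, size_reindex h ψ]
  | .box O φ => by simp only [reindex, MLFormula.size, size_reindex h φ]

lemma satisfies_reindex {n : ℕ} {Os₁ Os₂ : Set (SSF n)} (h : Os₁ ⊆ Os₂)
    (φ : MLFormula Os₁) : ∀ (M : KripkeModel n) (w : M.W),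
      Satisfies M w (reindex h φ) ↔ Satisfies M w φ := by
  induction φ with
  | var p => intro M w; simp only [reindex]; exact Iff.rfl
  | neg φ ih => intro M w; simp only [reindex, Satisfies]; exact not_congr (ih M w)
  | or φ ψ ih₁ ih₂ => intro M w; simp only [reindex, Satisfies]
                      exact or_congr (ih₁ M w) (ih₂ M w)
  | box O φ ih => intro M w; simp only [reindex, Satisfies]
                  exact forall₂_congr fun w' _ => ih M w'

lemma leExpr_of_subset {n : ℕ} {Os₁ Os₂ : Set (SSF n)} (h : Os₁ ⊆ Os₂) :
    LeExpr Os₁ Os₂ :=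
  fun φ => ⟨reindex h φ, fun M w => (satisfies_reindex h φ M w).symm⟩

lemma lePoly_of_subset {n : ℕ} {Os₁ Os₂ : Set (SSF n)} (h : Os₁ ⊆ Os₂) :
    LePoly Os₁ Os₂ :=
  ⟨Polynomial.X, fun φ => ⟨reindex h φ, fun M w => (satisfies_reindex h φ M w).symm,
    by rw [size_reindex h φ, Polynomial.eval_X]⟩⟩

/-- If every operator of `Os₁` is an operator of `Os₂` or a union of two operators of
`Os₂`, then `Os₂` is at least as expressive. -/
lemma leExpr_expand {n : ℕ} {Os₁ Os₂ : Set (SSF n)}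
    (h : ∀ O ∈ Os₁, O ∈ Os₂ ∨ ∃ O₁ ∈ Os₂, ∃ O₂ ∈ Os₂,
      ∀ (M : KripkeModel n) (w : M.W), O M w = O₁ M w ∪ O₂ M w) :
    LeExpr Os₁ Os₂ := by
  intro φ
  induction φ with
  | var p => exact ⟨.var p, fun M w => Iff.rfl⟩
  | neg φ ih =>
    obtain ⟨ψ, hψ⟩ := ih
    exact ⟨.neg ψ, fun M w => not_congr (hψ M w)⟩
  | or φ χ ih₁ ih₂ =>
    obtain ⟨ψ₁, h₁⟩ := ih₁
    obtain ⟨ψ₂, h₂⟩ := ih₂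
    exact ⟨.or ψ₁ ψ₂, fun M w => or_congr (h₁ M w) (h₂ M w)⟩
  | box O φ ih =>
    obtain ⟨ψ, hψ⟩ := ih
    rcases h O.1 O.2 with hmem | ⟨O₁, h1, O₂, h2, hu⟩
    · exact ⟨.box ⟨O.1, hmem⟩ ψ, fun M w => forall₂_congr fun w' _ => hψ M w'⟩
    · refine ⟨.neg (.or (.neg (.box ⟨O₁, h1⟩ ψ)) (.neg (.box ⟨O₂, h2⟩ ψ))), fun M w => ?_⟩
      simp only [Satisfies]
      show (∀ w' ∈ O.1 M w, Satisfies M w' φ) ↔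
        ¬ ((¬ ∀ w' ∈ O₁ M w, Satisfies M w' ψ) ∨ (¬ ∀ w' ∈ O₂ M w, Satisfies M w' ψ))
      rw [not_or, not_not, not_not]
      constructor
      · intro hall
        exact ⟨fun w' hw' => (hψ M w').1 (hall w' (by rw [hu]; exact Or.inl hw')),
               fun w' hw' => (hψ M w').1 (hall w' (by rw [hu]; exact Or.inr hw'))⟩
      · rintro ⟨ha, hb⟩ w' hw'
        rw [hu] at hw'
        rcases hw' with hw' | hw'
        · exact (hψ M w').2 (ha w' hw')
        · exact (hψ M w').2 (hb w' hw')

end Aux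
section Aux2

/-- Transfer of satisfaction along a frame morphism, for logics given by Boolean
functions that vanish on the all-false pattern. -/
lemma transfer_sat {k : ℕ} {F : Set ((Fin k → Bool) → Bool)}
    (hF : ∀ f ∈ F, f (zpat k) = false)
    (M M' : KripkeModel k) (j : M.W → M'.W)
    (hval : ∀ (p : ℕ) (w : M.W), w ∈ M.val p ↔ j w ∈ M'.val p)
    (hpat : ∀ (u v : M.W) (i0 : Fin k), M'.R i0 (j u) (j v) ↔ M.R i0 u v)
    (hout : ∀ (u : M.W) (v' : M'.W), (∀ v : M.W, v' ≠ j v) → ∀ i0 : Fin k, ¬ M'.R i0 (j u) v')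
    (ψ : MLFormula (boolSSFs F)) :
    ∀ w : M.W, Satisfies M w ψ ↔ Satisfies M' (j w) ψ := by
  induction ψ with
  | var p => intro w; exact hval p w
  | neg φ ih => intro w; simp only [Satisfies]; exact not_congr (ih w)
  | or φ χ ih₁ ih₂ => intro w; simp only [Satisfies]; exact or_congr (ih₁ w) (ih₂ w)
  | box O φ ih =>
    intro w
    obtain ⟨f, hfF, hOf⟩ := O.2
    simp only [Satisfies]
    constructor
    · intro hsat v' hv'
      rw [← hOf] at hv'
      by_cases hr : ∃ v : M.W, v' = j v
      · obtain ⟨v, rfl⟩ := hr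
        rw [← ih v]
        apply hsat
        rw [← hOf]
        show f (fun i0 => decide (M.R i0 w v)) = true
        have hv'' : f (fun i0 => decide (M'.R i0 (j w) (j v))) = true := hv'
        rwa [show (fun i0 => decide (M'.R i0 (j w) (j v)))
            = fun i0 => decide (M.R i0 w v) from
          funext fun i0 => decide_eq_decide.mpr (hpat w v i0)] at hv''
      · exfalso
        push_neg at hr
        have hz : (fun i0 => decide (M'.R i0 (j w) v')) = zpat k := by
          funext i0
          exact decide_eq_false (hout w v' hr i0)
        have hv'' : f (fun i0 => decide (M'.R i0 (j w) v')) = true := hv'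
        rw [hz, hF f hfF] at hv''
        exact Bool.false_ne_true hv''
    · intro hsat v hv
      rw [ih v]
      apply hsat
      rw [← hOf] at hv ⊢
      have hv'' : f (fun i0 => decide (M.R i0 w v)) = true := hv
      show f (fun i0 => decide (M'.R i0 (j w) (j v))) = true
      rwa [show (fun i0 => decide (M'.R i0 (j w) (j v)))
          = fun i0 => decide (M.R i0 w v) from
        funext fun i0 => decide_eq_decide.mpr (hpat w v i0)]

/-- The path model of length `i` with letters `lt` : a `ℕ`-path `0 → 1 → ⋯ → i`
where the pattern of the edge `d → d+1` is `lt d`; the variable `0` holds at the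
endpoint `i` iff `b = true`. -/
abbrev pathM (k i : ℕ) (lt : ℕ → Fin k → Bool) (b : Bool) : KripkeModel k where
  W := ℕ
  nonempty := ⟨0⟩
  R := fun j d d' => d' = d + 1 ∧ d + 1 ≤ i ∧ lt d j = true
  val := fun p => {d | b = true ∧ p = 0 ∧ d = i}

lemma mem_pathM_succs {k : ℕ} {f : (Fin k → Bool) → Bool} (hf0 : f (zpat k) = false)
    {i : ℕ} {lt : ℕ → Fin k → Bool} {b : Bool} {d d' : ℕ} :
    d' ∈ OfBool f (pathM k i lt b) d ↔ d' = d + 1 ∧ d + 1 ≤ i ∧ f (lt d) = true := by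
  simp only [OfBool, Set.mem_setOf_eq]
  by_cases h1 : d' = d + 1 ∧ d + 1 ≤ i
  · have heq : (fun j => @decide (d' = d + 1 ∧ d + 1 ≤ i ∧ lt d j = true) (Classical.propDecidable _)) = lt d := by
      funext j
      cases hl : lt d j
      · exact @decide_eq_false _ (Classical.propDecidable _) (fun hc => Bool.false_ne_true hc.2.2)
      · exact @decide_eq_true _ (Classical.propDecidable _) ⟨h1.1, h1.2, rfl⟩
    rw [heq]
    exact ⟨fun h => ⟨h1.1, h1.2, h⟩, fun h => h.2.2⟩
  · have heq : (fun j => @decide (d' = d + 1 ∧ d + 1 ≤ i ∧ lt d j = true) (Classical.propDecidable _)) = zpat k := by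
      funext j
      exact @decide_eq_false _ (Classical.propDecidable _) (fun hc => h1 ⟨hc.1, hc.2.1⟩)
    rw [heq, hf0]
    exact ⟨fun h => absurd h Bool.false_ne_true, fun h => absurd ⟨h.1, h.2.1⟩ h1⟩

/-- Satisfaction at world `d+1` of the extended path equals satisfaction at `d` of the
shifted path. -/
lemma tail_sat {k : ℕ} {F : Set ((Fin k → Bool) → Bool)}
    (hF : ∀ f ∈ F, f (zpat k) = false) (i : ℕ) (lt : ℕ → Fin k → Bool) (b : Bool)
    (ψ : MLFormula (boolSSFs F)) (d : ℕ) :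
    Satisfies (pathM k (i + 1) lt b) (d + 1) ψ ↔
      Satisfies (pathM k i (fun e => lt (e + 1)) b) d ψ := by
  have := transfer_sat hF (pathM k i (fun e => lt (e + 1)) b) (pathM k (i + 1) lt b)
    (fun d => d + 1) ?_ ?_ ?_ ψ d
  · exact this.symm
  · intro p w
    show (b = true ∧ p = 0 ∧ w = i) ↔ (b = true ∧ p = 0 ∧ w + 1 = i + 1)
    constructor
    · rintro ⟨h1, h2, h3⟩; exact ⟨h1, h2, by rw [h3]⟩
    · rintro ⟨h1, h2, h3⟩; exact ⟨h1, h2, Nat.succ_injective h3⟩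
  · intro u v i0
    show (v + 1 = u + 1 + 1 ∧ u + 1 + 1 ≤ i + 1 ∧ lt (u + 1) i0 = true) ↔
      (v = u + 1 ∧ u + 1 ≤ i ∧ lt (u + 1) i0 = true)
    constructor
    · rintro ⟨h1, h2, h3⟩
      exact ⟨Nat.succ_injective h1, Nat.succ_le_succ_iff.mp h2, h3⟩
    · rintro ⟨h1, h2, h3⟩; exact ⟨by rw [h1], Nat.succ_le_succ h2, h3⟩
  · intro u v' hv' i0
    show ¬ (v' = u + 1 + 1 ∧ u + 1 + 1 ≤ i + 1 ∧ lt (u + 1) i0 = true)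
    rintro ⟨h1, -, -⟩
    exact hv' (u + 1) h1

end Aux2
section Aux3

/-- `[O]^n p₀`. -/
noncomputable def phiSeq {n : ℕ} {Os : Set (SSF n)} (O : Os) : ℕ → MLFormula Os
  | 0 => .var 0
  | m + 1 => .box O (phiSeq O m)

lemma phiSeq_size {n : ℕ} {Os : Set (SSF n)} (O : Os) : ∀ m, (phiSeq O m).size = m + 1
  | 0 => rfl
  | m + 1 => by simp only [phiSeq, MLFormula.size, phiSeq_size O m]

lemma phiSeq_sat {k : ℕ} {F : Set ((Fin k → Bool) → Bool)} {x y : Fin k → Bool}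
    (hx0 : x ≠ zpat k) (hy0 : y ≠ zpat k)
    (hmem : OfBool (unionFn x y) ∈ boolSSFs F)
    (i : ℕ) (lt : ℕ → Fin k → Bool) (hlt : ∀ d, lt d = x ∨ lt d = y) :
    ∀ (m d : ℕ), d + m ≤ i →
      (Satisfies (pathM k i lt true) d (phiSeq ⟨_, hmem⟩ m) ↔ d + m = i) ∧
      ¬ Satisfies (pathM k i lt false) d (phiSeq ⟨_, hmem⟩ m) := by
  have hu0 : unionFn x y (zpat k) = false := by
    show (decide (zpat k = x) || decide (zpat k = y)) = false
    rw [decide_eq_false (Ne.symm hx0), decide_eq_false (Ne.symm hy0)]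
    rfl
  have hult : ∀ d, unionFn x y (lt d) = true := by
    intro d
    show (decide (lt d = x) || decide (lt d = y)) = true
    rcases hlt d with h | h
    · rw [decide_eq_true h]; rfl
    · rw [decide_eq_true h, Bool.or_true]
  intro m
  induction m with
  | zero =>
    intro d hd
    constructor
    · show ((true = true ∧ (0:ℕ) = 0 ∧ d = i) ↔ d + 0 = i)
      constructor
      · rintro ⟨-, -, h⟩; omega
      · intro h; exact ⟨rfl, rfl, by omega⟩
    · show ¬ (false = true ∧ (0:ℕ) = 0 ∧ d = i)
      rintro ⟨h, -, -⟩
      exact Bool.false_ne_true h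
  | succ m ih =>
    intro d hd
    have hd1 : d + 1 ≤ i := by omega
    have hstep : ∀ b (d' : ℕ), d' ∈ OfBool (unionFn x y) (pathM k i lt b) d ↔ d' = d + 1 := by
      intro b d'
      rw [mem_pathM_succs hu0]
      constructor
      · rintro ⟨h, -, -⟩; exact h
      · intro h; exact ⟨h, hd1, hult d⟩
    have ihd := ih (d + 1) (by omega)
    constructor
    · show (∀ d' ∈ OfBool (unionFn x y) (pathM k i lt true) d,
          Satisfies (pathM k i lt true) d' (phiSeq ⟨_, hmem⟩ m)) ↔ d + (m + 1) = i
      constructor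
      · intro hall
        have := hall (d + 1) ((hstep true (d + 1)).mpr rfl)
        have h2 := ihd.1.mp this
        omega
      · intro h d' hd'
        rw [(hstep true d').mp hd']
        exact ihd.1.mpr (by omega)
    · show ¬ (∀ d' ∈ OfBool (unionFn x y) (pathM k i lt false) d,
          Satisfies (pathM k i lt false) d' (phiSeq ⟨_, hmem⟩ m))
      intro hall
      exact ihd.2 (hall (d + 1) ((hstep false (d + 1)).mpr rfl))

end Aux3
section Aux4

/-- The letter sequence of the path determined by the string `s`. -/
noncomputable def letterOf {k : ℕ} (x y : Fin k → Bool) (s : ℕ → Fin 2) :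
    ℕ → Fin k → Bool :=
  fun d => if s d = 0 then x else y

/-- Satisfaction only depends on the letter function extensionally. -/
lemma pathM_letter_congr {k : ℕ} {F : Set ((Fin k → Bool) → Bool)} (i : ℕ)
    (l₁ l₂ : ℕ → Fin k → Bool) (h : l₁ = l₂) (b : Bool) (ψ : MLFormula (boolSSFs F))
    (w : ℕ) : Satisfies (pathM k i l₁ b) w ψ ↔ Satisfies (pathM k i l₂ b) w ψ := by
  subst h; exact Iff.rfl

/-- The set of strings whose positive and negative path models are distinguished by `ψ`. -/
def DiffSet {k : ℕ} (x y : Fin k → Bool) (F : Set ((Fin k → Bool) → Bool))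
    (i : ℕ) (ψ : MLFormula (boolSSFs F)) : Set (Fin i → Fin 2) :=
  {s | ¬ (Satisfies (pathM k i (letterOf x y (extendStr s)) true) 0 ψ ↔
          Satisfies (pathM k i (letterOf x y (extendStr s)) false) 0 ψ)}

lemma diff_card {k : ℕ} {F : Set ((Fin k → Bool) → Bool)} {x y : Fin k → Bool}
    (hF0 : ∀ f ∈ F, f (zpat k) = false)
    (hxy : ∀ f ∈ F, ¬ (f x = true ∧ f y = true))
    (ψ : MLFormula (boolSSFs F)) :
    ∀ i : ℕ, (DiffSet x y F i ψ).ncard ≤ cnt ψ := by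
  induction ψ with
  | var p =>
    intro i
    have hcnt : cnt (.var p : MLFormula (boolSSFs F)) = 1 := by simp [cnt]
    rw [hcnt]
    cases i with
    | zero =>
      calc (DiffSet x y F 0 (.var p)).ncard
          ≤ (Set.univ : Set (Fin 0 → Fin 2)).ncard :=
            Set.ncard_le_ncard (Set.subset_univ _) Set.finite_univ
        _ = 1 := by
            rw [Set.ncard_univ]
            simp [Nat.card_fun, Nat.card_eq_fintype_card]
    | succ n =>
      have hempty : DiffSet x y F (n + 1) (.var p) = ∅ := by
        rw [Set.eq_empty_iff_forall_notMem]
        intro σ hσ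
        apply hσ
        have h1 : ∀ b, Satisfies (pathM k (n + 1) (letterOf x y (extendStr σ)) b)
            0 (.var p : MLFormula (boolSSFs F)) ↔
            (b = true ∧ p = 0 ∧ (0 : ℕ) = n + 1) := by
          intro b; exact Iff.rfl
        rw [h1, h1]
        constructor
        · rintro ⟨-, -, h⟩; omega
        · rintro ⟨-, -, h⟩; omega
      rw [hempty]
      simp
  | neg φ ih =>
    intro i
    have heq : DiffSet x y F i (.neg φ) = DiffSet x y F i φ := by
      ext σ
      simp only [DiffSet, Set.mem_setOf_eq, Satisfies, not_iff_not]
    rw [heq]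
    exact ih i
  | or φ χ ih₁ ih₂ =>
    intro i
    have hsub : DiffSet x y F i (.or φ χ) ⊆ DiffSet x y F i φ ∪ DiffSet x y F i χ := by
      intro σ hσ
      rw [Set.mem_union]
      by_contra hn
      push_neg at hn
      obtain ⟨h1, h2⟩ := hn
      simp only [DiffSet, Set.mem_setOf_eq, not_not] at h1 h2
      simp only [DiffSet, Set.mem_setOf_eq, Satisfies] at hσ
      exact hσ (or_congr h1 h2)
    calc (DiffSet x y F i (.or φ χ)).ncard
        ≤ (DiffSet x y F i φ ∪ DiffSet x y F i χ).ncard :=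
          Set.ncard_le_ncard hsub (Set.toFinite _)
      _ ≤ (DiffSet x y F i φ).ncard + (DiffSet x y F i χ).ncard := Set.ncard_union_le _ _
      _ ≤ cnt φ + cnt χ := Nat.add_le_add (ih₁ i) (ih₂ i)
      _ = cnt (.or φ χ) := by simp [cnt]
  | box O φ ih =>
    intro i
    obtain ⟨f, hfF, hOf⟩ := O.2
    have hcnt : cnt (.box O φ) = cnt φ := by simp [cnt]
    rw [hcnt]
    cases i with
    | zero =>
      have hempty : DiffSet x y F 0 (.box O φ) = ∅ := by
        rw [Set.eq_empty_iff_forall_notMem]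
        intro σ hσ
        apply hσ
        have h1 : ∀ b, Satisfies (pathM k 0 (letterOf x y (extendStr σ)) b) 0 (.box O φ) := by
          intro b
          simp only [Satisfies]
          intro d' hd'
          rw [← hOf, mem_pathM_succs (hF0 f hfF)] at hd'
          omega
        exact iff_of_true (h1 true) (h1 false)
      rw [hempty]
      simp
    | succ n =>
      set tl : (Fin (n + 1) → Fin 2) → Fin n → Fin 2 := fun σ j => σ j.succ with htl
      have hmodel : ∀ (σ : Fin (n + 1) → Fin 2),
          (fun e => letterOf x y (extendStr σ) (e + 1))
            = letterOf x y (extendStr (tl σ)) := by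
        intro σ
        have hfun : (fun e => letterOf x y (extendStr σ) (e + 1))
            = letterOf x y (extendStr (tl σ)) := by
          funext e
          show (if extendStr σ (e + 1) = 0 then x else y)
            = (if extendStr (tl σ) e = 0 then x else y)
          have hidx : extendStr σ (e + 1) = extendStr (tl σ) e := by
            unfold extendStr
            by_cases he : e < n
            · rw [dif_pos (by omega : e + 1 < n + 1), dif_pos he]
              exact congrArg σ (Fin.ext rfl)
            · rw [dif_neg (by omega), dif_neg he]
          rw [hidx]
        rw [hfun]
      have hkey : ∀ σ ∈ DiffSet x y F (n + 1) (.box O φ),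
          f (letterOf x y (extendStr σ) 0) = true ∧ tl σ ∈ DiffSet x y F n φ := by
        intro σ hσ
        set lt := letterOf x y (extendStr σ) with hlt
        have hsucc : ∀ (b : Bool) (d' : ℕ),
            d' ∈ O.val (pathM k (n + 1) lt b) 0 ↔
              (d' = 1 ∧ f (lt 0) = true) := by
          intro b d'
          rw [show O.val = OfBool f from hOf.symm, mem_pathM_succs (hF0 f hfF)]
          constructor
          · rintro ⟨h1, -, h3⟩; exact ⟨h1, h3⟩
          · rintro ⟨h1, h3⟩; exact ⟨h1, by omega, h3⟩
        have hbox : ∀ b, Satisfies (pathM k (n + 1) lt b) 0 (.box O φ) ↔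
            (f (lt 0) = true → Satisfies (pathM k (n + 1) lt b) 1 φ) := by
          intro b
          simp only [Satisfies]
          constructor
          · intro hall hf
            exact hall 1 ((hsucc b 1).mpr ⟨rfl, hf⟩)
          · intro h d' hd'
            obtain ⟨rfl, hf⟩ := (hsucc b d').mp hd'
            exact h hf
        by_cases hf : f (lt 0) = true
        · refine ⟨hf, ?_⟩
          have hiff : ∀ b, Satisfies (pathM k (n + 1) lt b) 0 (.box O φ) ↔
              Satisfies (pathM k n (letterOf x y (extendStr (tl σ))) b) 0 φ := by
            intro b
            rw [hbox b]
            have h1 : Satisfies (pathM k (n + 1) lt b) 1 φ ↔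
                Satisfies (pathM k n (letterOf x y (extendStr (tl σ))) b) 0 φ := by
              have h2 := tail_sat hF0 n lt b φ 0
              exact h2.trans (pathM_letter_congr n _ _ (hmodel σ) b φ 0)
            rw [h1]
            exact ⟨fun h => h hf, fun h _ => h⟩
          intro hcon
          exact hσ (((hiff true).trans hcon).trans (hiff false).symm)
        · exfalso
          apply hσ
          have h1 : ∀ b, Satisfies (pathM k (n + 1) lt b) 0 (.box O φ) := by
            intro b
            rw [hbox b]
            intro hc
            exact absurd hc hf
          exact iff_of_true (h1 true) (h1 false)
      have hinj : Set.InjOn tl (DiffSet x y F (n + 1) (.box O φ)) := by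
        intro σ₁ h₁ σ₂ h₂ heq
        have hl₁ := (hkey σ₁ h₁).1
        have hl₂ := (hkey σ₂ h₂).1
        have h0 : σ₁ 0 = σ₂ 0 := by
          by_contra hne
          have hx1 : extendStr σ₁ 0 = σ₁ 0 := by
            unfold extendStr
            rw [dif_pos (by omega : (0:ℕ) < n + 1)]
            exact congrArg σ₁ (Fin.ext rfl)
          have hx2 : extendStr σ₂ 0 = σ₂ 0 := by
            unfold extendStr
            rw [dif_pos (by omega : (0:ℕ) < n + 1)]
            exact congrArg σ₂ (Fin.ext rfl)
          apply hxy f hfF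
          have hlt1 : f (if σ₁ 0 = 0 then x else y) = true := by
            have := hl₁
            rw [show letterOf x y (extendStr σ₁) 0 = if σ₁ 0 = 0 then x else y by
              unfold letterOf; rw [hx1]] at this
            exact this
          have hlt2 : f (if σ₂ 0 = 0 then x else y) = true := by
            have := hl₂
            rw [show letterOf x y (extendStr σ₂) 0 = if σ₂ 0 = 0 then x else y by
              unfold letterOf; rw [hx2]] at this
            exact this
          by_cases h10 : σ₁ 0 = 0
          · by_cases h20 : σ₂ 0 = 0
            · exact absurd (h10.trans h20.symm) hne
            · rw [if_pos h10] at hlt1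
              rw [if_neg h20] at hlt2
              exact ⟨hlt1, hlt2⟩
          · by_cases h20 : σ₂ 0 = 0
            · rw [if_neg h10] at hlt1
              rw [if_pos h20] at hlt2
              exact ⟨hlt2, hlt1⟩
            · exact absurd ((Fin.eq_one_of_ne_zero _ h10).trans
                (Fin.eq_one_of_ne_zero _ h20).symm) hne
        funext j
        refine Fin.cases ?_ ?_ j
        · exact h0
        · intro m
          exact congrFun heq m
      calc (DiffSet x y F (n + 1) (.box O φ)).ncard
          ≤ (DiffSet x y F n φ).ncard :=
            Set.ncard_le_ncard_of_injOn tl (fun σ hσ => (hkey σ hσ).2) hinj (Set.toFinite _)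
        _ ≤ cnt φ := ih n

end Aux4
section Aux5

/-- The succinctness lower bound: any `boolSSFs Ft`-formula equivalent to `[∪xy]^i p₀`
has at least `2^i` variable occurrences. -/
lemma gap_lower {k : ℕ} {Fs Ft : Set ((Fin k → Bool) → Bool)} {x y : Fin k → Bool}
    (hx0 : x ≠ zpat k) (hy0 : y ≠ zpat k)
    (hmem : OfBool (unionFn x y) ∈ boolSSFs Fs)
    (hF0 : ∀ f ∈ Ft, f (zpat k) = false)
    (hxy : ∀ f ∈ Ft, ¬ (f x = true ∧ f y = true))
    (i : ℕ) (ψ : MLFormula (boolSSFs Ft))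
    (hequiv : FEquiv (phiSeq ⟨_, hmem⟩ i) ψ) :
    2 ^ i ≤ ψ.size := by
  have huniv : DiffSet x y Ft i ψ = Set.univ := by
    rw [Set.eq_univ_iff_forall]
    intro σ
    have hlt : ∀ d, letterOf x y (extendStr σ) d = x ∨ letterOf x y (extendStr σ) d = y := by
      intro d
      unfold letterOf
      by_cases h : extendStr σ d = 0
      · rw [if_pos h]; exact Or.inl rfl
      · rw [if_neg h]; exact Or.inr rfl
    have hsat := phiSeq_sat hx0 hy0 hmem i (letterOf x y (extendStr σ)) hlt i 0 (by omega)
    show ¬ (Satisfies (pathM k i (letterOf x y (extendStr σ)) true) 0 ψ ↔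
            Satisfies (pathM k i (letterOf x y (extendStr σ)) false) 0 ψ)
    intro hiff
    have hP : Satisfies (pathM k i (letterOf x y (extendStr σ)) true) 0
        (phiSeq ⟨_, hmem⟩ i) := hsat.1.mpr (by omega)
    have hPψ := (hequiv (pathM k i (letterOf x y (extendStr σ)) true) 0).mp hP
    have hMψ := hiff.mp hPψ
    exact hsat.2 ((hequiv (pathM k i (letterOf x y (extendStr σ)) false) 0).mpr hMψ)
  calc 2 ^ i = (Set.univ : Set (Fin i → Fin 2)).ncard := by
        rw [Set.ncard_univ]
        simp [Nat.card_fun, Nat.card_eq_fintype_card]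
    _ = (DiffSet x y Ft i ψ).ncard := by rw [huniv]
    _ ≤ cnt ψ := diff_card hF0 hxy ψ i
    _ ≤ ψ.size := cnt_le_size ψ

/-- A two-world model with one edge of pattern `a`. -/
def Mone {k : ℕ} (a : Fin k → Bool) : KripkeModel k where
  W := Bool
  nonempty := ⟨false⟩
  R := fun j u v => u = false ∧ v = true ∧ a j = true
  val := fun _ => ∅

/-- A model with no edges. -/
def Mzero (k : ℕ) : KripkeModel k where
  W := Bool
  nonempty := ⟨false⟩
  R := fun _ _ _ => False
  val := fun _ => ∅

lemma indist {k : ℕ} {Ft : Set ((Fin k → Bool) → Bool)} {a : Fin k → Bool}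
    (hb : ∀ f ∈ Ft, ∃ b : Fin k → Bool, b ≠ zpat k ∧ b ≠ a ∧ f = atomFn b)
    (ψ : MLFormula (boolSSFs Ft)) :
    ∀ w w' : Bool, Satisfies (Mone a) w ψ ↔ Satisfies (Mzero k) w' ψ := by
  induction ψ with
  | var p =>
    intro w w'
    show (w ∈ (∅ : Set Bool)) ↔ (w' ∈ (∅ : Set Bool))
    simp
  | neg φ ih =>
    intro w w'
    simp only [Satisfies]
    exact not_congr (ih w w')
  | or φ χ ih₁ ih₂ =>
    intro w w'
    simp only [Satisfies]
    exact or_congr (ih₁ w w') (ih₂ w w')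
  | box O φ ih =>
    intro w w'
    obtain ⟨f, hfF, hOf⟩ := O.2
    obtain ⟨c, hc0, hca, rfl⟩ := hb f hfF
    have hempty1 : ∀ u v' : Bool, v' ∉ OfBool (atomFn c) (Mone a) u := by
      intro u v' hv'
      have hv'' : atomFn c (fun j => decide ((Mone a).R j u v')) = true := hv'
      by_cases h1 : u = false ∧ v' = true
      · have hp : (fun j => decide ((Mone a).R j u v')) = a := by
          funext j
          cases hl : a j
          · exact @decide_eq_false _ (Classical.propDecidable _)
              (fun hc => Bool.false_ne_true (hl ▸
                (show u = false ∧ v' = true ∧ a j = true from hc).2.2))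
          · exact @decide_eq_true _ (Classical.propDecidable _)
              (show (Mone a).R j u v' from ⟨h1.1, h1.2, hl⟩)
        rw [hp] at hv''
        exact hca (of_decide_eq_true hv'').symm
      · have hp : (fun j => decide ((Mone a).R j u v')) = zpat k := by
          funext j
          exact @decide_eq_false _ (Classical.propDecidable _)
            (fun hc => h1 ⟨(show u = false ∧ v' = true ∧ a j = true from hc).1,
              (show u = false ∧ v' = true ∧ a j = true from hc).2.1⟩)
        rw [hp] at hv''
        exact hc0 (of_decide_eq_true hv'').symm
    have hempty2 : ∀ u v' : Bool, v' ∉ OfBool (atomFn c) (Mzero k) u := by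
      intro u v' hv'
      have hv'' : atomFn c (fun j => decide ((Mzero k).R j u v')) = true := hv'
      have hp : (fun j => decide ((Mzero k).R j u v')) = zpat k := by
        funext j
        exact @decide_eq_false _ (Classical.propDecidable _)
          (fun hc => (show False from hc))
      rw [hp] at hv''
      exact hc0 (of_decide_eq_true hv'').symm
    simp only [Satisfies]
    refine iff_of_true ?_ ?_
    · intro v' hv'
      rw [← hOf] at hv'
      exact absurd hv' (hempty1 w v')
    · intro v' hv'
      rw [← hOf] at hv'
      exact absurd hv' (hempty2 w' v')

lemma F_not_leExpr {k : ℕ} {Fs Ft : Set ((Fin k → Bool) → Bool)} {a : Fin k → Bool}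
    (ha0 : a ≠ zpat k)
    (hmem : OfBool (atomFn a) ∈ boolSSFs Fs)
    (hb : ∀ f ∈ Ft, ∃ b : Fin k → Bool, b ≠ zpat k ∧ b ≠ a ∧ f = atomFn b) :
    ¬ LeExpr (boolSSFs Fs) (boolSSFs Ft) := by
  intro hle
  obtain ⟨ψ, hψ⟩ := hle (.box ⟨_, hmem⟩ (.var 0))
  have h1 : ¬ Satisfies (Mone a) false (.box ⟨_, hmem⟩ (.var 0) : MLFormula (boolSSFs Fs)) := by
    simp only [Satisfies]
    intro hall
    have hmem1 : (true : Bool) ∈ OfBool (atomFn a) (Mone a) false := by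
      show atomFn a (fun j => decide ((Mone a).R j false true)) = true
      have hp : (fun j => decide ((Mone a).R j false true)) = a := by
        funext j
        cases hl : a j
        · exact @decide_eq_false _ (Classical.propDecidable _)
            (fun hc => Bool.false_ne_true (hl ▸
              (show false = false ∧ true = true ∧ a j = true from hc).2.2))
        · exact @decide_eq_true _ (Classical.propDecidable _)
            (show (Mone a).R j false true from ⟨rfl, rfl, hl⟩)
      rw [hp]
      unfold atomFn
      exact decide_eq_true rfl
    have hsat := hall true hmem1
    exact Set.notMem_empty true hsat
  have h2 : Satisfies (Mzero k) false (.box ⟨_, hmem⟩ (.var 0) : MLFormula (boolSSFs Fs)) := by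
    simp only [Satisfies]
    intro v' hv'
    exfalso
    have hv'' : atomFn a (fun j => decide ((Mzero k).R j false v')) = true := hv'
    have hp : (fun j => decide ((Mzero k).R j false v')) = zpat k := by
      funext j
      exact @decide_eq_false _ (Classical.propDecidable _) (fun hc => (show False from hc))
    rw [hp] at hv''
    exact ha0 (of_decide_eq_true hv'').symm
  exact h1 ((hψ (Mone a) false).mpr ((indist hb ψ false false).mpr
    ((hψ (Mzero k) false).mp h2)))

end Aux5
section Aux6

open Filter in
lemma poly_lt_two_pow (p : Polynomial ℕ) : ∃ i : ℕ, p.eval (i + 1) < 2 ^ i := by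
  classical
  set d := p.natDegree with hd
  set A := ∑ j ∈ Finset.range (d + 1), p.coeff j with hA
  have hbound : ∀ n : ℕ, 1 ≤ n → p.eval n ≤ A * n ^ d := by
    intro n hn
    rw [Polynomial.eval_eq_sum_range]
    calc ∑ j ∈ Finset.range (d + 1), p.coeff j * n ^ j
        ≤ ∑ j ∈ Finset.range (d + 1), p.coeff j * n ^ d := by
          apply Finset.sum_le_sum
          intro j hj
          exact Nat.mul_le_mul_left _
            (Nat.pow_le_pow_right hn (Nat.lt_succ_iff.mp (Finset.mem_range.mp hj)))
      _ = A * n ^ d := by rw [← Finset.sum_mul]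
  have hlo := isLittleO_pow_const_const_pow_of_one_lt (R := ℝ) d (one_lt_two)
  have heps : (0 : ℝ) < 1 / (4 * ((A : ℝ) + 1)) := by positivity
  have hev := hlo.def heps
  rw [Filter.eventually_atTop] at hev
  obtain ⟨N, hN⟩ := hev
  refine ⟨N, ?_⟩
  have h1 := hN (N + 1) (Nat.le_succ N)
  rw [Real.norm_eq_abs, Real.norm_eq_abs, abs_of_nonneg (by positivity),
    abs_of_nonneg (by positivity)] at h1
  have h2 : (A : ℝ) * ((N + 1 : ℕ) : ℝ) ^ d < 2 ^ N := by
    have h2pow : (0 : ℝ) < 2 ^ N := by positivity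
    have hA0 : (0 : ℝ) ≤ (A : ℝ) := Nat.cast_nonneg A
    have hstep := mul_le_mul_of_nonneg_left h1 hA0
    have hps : (2 : ℝ) ^ (N + 1) = 2 ^ N * 2 := pow_succ 2 N
    have hc : (4 * ((A : ℝ) + 1)) * (1 / (4 * ((A : ℝ) + 1))) = 1 := by
      field_simp
    nlinarith [hstep, hps, h2pow, hA0, hc]
  have h3 : p.eval (N + 1) ≤ A * (N + 1) ^ d := hbound (N + 1) (by omega)
  have h5 : A * (N + 1) ^ d < 2 ^ N := by exact_mod_cast h2
  omega
end Aux6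
section Aux7

lemma OfBool_union {k : ℕ} (x y : Fin k → Bool) (M : KripkeModel k) (w : M.W) :
    OfBool (unionFn x y) M w = OfBool (atomFn x) M w ∪ OfBool (atomFn y) M w := by
  ext v
  simp only [OfBool, Set.mem_setOf_eq, Set.mem_union, unionFn, atomFn, Bool.or_eq_true]

/-- The family realizing the partial order in expressivity. -/
def Ffam {k : ℕ} {S : Type} [PartialOrder S] (xs : S → Fin k → Bool) (s : S) :
    Set ((Fin k → Bool) → Bool) :=
  {f | ∃ u : S, u ≤ s ∧ f = atomFn (xs u)}

/-- The family realizing the partial order in succinctness. -/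
def Gfam {k : ℕ} {S : Type} [PartialOrder S] (xs ys : S → Fin k → Bool) (s : S) :
    Set ((Fin k → Bool) → Bool) :=
  {f | (∃ c : Fin k → Bool, c ≠ zpat k ∧ f = atomFn c) ∨
    ∃ u : S, u ≤ s ∧ f = unionFn (xs u) (ys u)}

lemma Gfam_mem_union {k : ℕ} {S : Type} [PartialOrder S] (xs ys : S → Fin k → Bool)
    (s : S) : OfBool (unionFn (xs s) (ys s)) ∈ boolSSFs (Gfam xs ys s) :=
  ⟨_, Or.inr ⟨s, le_rfl, rfl⟩, rfl⟩

lemma Ffam_leExpr {k : ℕ} {S : Type} [PartialOrder S] (xs : S → Fin k → Bool)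
    {s t : S} (hst : s ≤ t) : LeExpr (boolSSFs (Ffam xs s)) (boolSSFs (Ffam xs t)) := by
  apply leExpr_of_subset
  rintro O ⟨f, hf, rfl⟩
  simp only [Ffam, Set.mem_setOf_eq] at hf
  obtain ⟨u, hu, rfl⟩ := hf
  exact ⟨_, ⟨u, le_trans hu hst, rfl⟩, rfl⟩

lemma Ffam_not_leExpr {k : ℕ} {S : Type} [PartialOrder S] {xs : S → Fin k → Bool}
    (hx0 : ∀ s, xs s ≠ zpat k) (hxinj : ∀ s u : S, xs u = xs s → u = s)
    {s t : S} (hst : ¬ s ≤ t) :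
    ¬ LeExpr (boolSSFs (Ffam xs s)) (boolSSFs (Ffam xs t)) := by
  apply F_not_leExpr (hx0 s) (⟨_, ⟨s, le_refl s, rfl⟩, rfl⟩ :
    OfBool (atomFn (xs s)) ∈ boolSSFs (Ffam xs s))
  intro f hf
  simp only [Ffam, Set.mem_setOf_eq] at hf
  obtain ⟨u, hu, rfl⟩ := hf
  exact ⟨xs u, hx0 u, fun h => hst ((hxinj s u h) ▸ hu), rfl⟩

lemma Gfam_lePoly {k : ℕ} {S : Type} [PartialOrder S] (xs ys : S → Fin k → Bool)
    {s t : S} (hst : s ≤ t) : LePoly (boolSSFs (Gfam xs ys s)) (boolSSFs (Gfam xs ys t)) := by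
  apply lePoly_of_subset
  rintro O ⟨f, hf, rfl⟩
  simp only [Gfam, Set.mem_setOf_eq] at hf
  rcases hf with ⟨c, hc, rfl⟩ | ⟨u, hu, rfl⟩
  · exact ⟨_, Or.inl ⟨c, hc, rfl⟩, rfl⟩
  · exact ⟨_, Or.inr ⟨u, le_trans hu hst, rfl⟩, rfl⟩

lemma Gfam_leExpr {k : ℕ} {S : Type} [PartialOrder S] {xs ys : S → Fin k → Bool}
    (hx0 : ∀ s, xs s ≠ zpat k) (hy0 : ∀ s, ys s ≠ zpat k) (a b : S) :
    LeExpr (boolSSFs (Gfam xs ys a)) (boolSSFs (Gfam xs ys b)) := by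
  apply leExpr_expand
  rintro O ⟨f, hf, rfl⟩
  simp only [Gfam, Set.mem_setOf_eq] at hf
  rcases hf with ⟨c, hc, rfl⟩ | ⟨u, hu, rfl⟩
  · exact Or.inl ⟨atomFn c, Or.inl ⟨c, hc, rfl⟩, rfl⟩
  · exact Or.inr ⟨OfBool (atomFn (xs u)), ⟨_, Or.inl ⟨_, hx0 u, rfl⟩, rfl⟩,
      OfBool (atomFn (ys u)), ⟨_, Or.inl ⟨_, hy0 u, rfl⟩, rfl⟩,
      fun M w => OfBool_union (xs u) (ys u) M w⟩

lemma Gfam_gap {k : ℕ} {S : Type} [PartialOrder S] {xs ys : S → Fin k → Bool}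
    (hx0 : ∀ s, xs s ≠ zpat k) (hy0 : ∀ s, ys s ≠ zpat k)
    (hxyne : ∀ s, xs s ≠ ys s)
    (hsep : ∀ s u : S, u ≠ s →
      ¬ ((xs s = xs u ∨ xs s = ys u) ∧ (ys s = xs u ∨ ys s = ys u)))
    {s t : S} (hst : ¬ s ≤ t) (i : ℕ)
    (ψ : MLFormula (boolSSFs (Gfam xs ys t)))
    (he : FEquiv (phiSeq ⟨_, Gfam_mem_union xs ys s⟩ i) ψ) : 2 ^ i ≤ ψ.size := by
  apply gap_lower (hx0 s) (hy0 s) (Gfam_mem_union xs ys s) ?_ ?_ i ψ he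
  · intro f hf
    simp only [Gfam, Set.mem_setOf_eq] at hf
    rcases hf with ⟨c, hc, rfl⟩ | ⟨u, hu, rfl⟩
    · unfold atomFn
      exact decide_eq_false (fun h => hc h.symm)
    · unfold unionFn
      rw [decide_eq_false (fun h => hx0 u h.symm), decide_eq_false (fun h => hy0 u h.symm)]
      rfl
  · intro f hf
    simp only [Gfam, Set.mem_setOf_eq] at hf
    rintro ⟨h1, h2⟩
    rcases hf with ⟨c, hc, rfl⟩ | ⟨u, hu, rfl⟩
    · unfold atomFn at h1 h2
      exact hxyne s ((of_decide_eq_true h1).trans (of_decide_eq_true h2).symm)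
    · have hus : u ≠ s := fun h => hst (h ▸ hu)
      unfold unionFn at h1 h2
      rw [Bool.or_eq_true] at h1 h2
      apply hsep s u hus
      constructor
      · rcases h1 with h | h
        · exact Or.inl (of_decide_eq_true h)
        · exact Or.inr (of_decide_eq_true h)
      · rcases h2 with h | h
        · exact Or.inl (of_decide_eq_true h)
        · exact Or.inr (of_decide_eq_true h)

lemma Gfam_not_lePoly {k : ℕ} {S : Type} [PartialOrder S] {xs ys : S → Fin k → Bool}
    (hx0 : ∀ s, xs s ≠ zpat k) (hy0 : ∀ s, ys s ≠ zpat k)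
    (hxyne : ∀ s, xs s ≠ ys s)
    (hsep : ∀ s u : S, u ≠ s →
      ¬ ((xs s = xs u ∨ xs s = ys u) ∧ (ys s = xs u ∨ ys s = ys u)))
    {s t : S} (hst : ¬ s ≤ t) :
    ¬ LePoly (boolSSFs (Gfam xs ys s)) (boolSSFs (Gfam xs ys t)) := by
  rintro ⟨p, hp⟩
  obtain ⟨i, hi⟩ := poly_lt_two_pow p
  obtain ⟨ψ, hψe, hψs⟩ := hp (phiSeq ⟨_, Gfam_mem_union xs ys s⟩ i)
  have hlow := Gfam_gap hx0 hy0 hxyne hsep hst i ψ hψe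
  rw [phiSeq_size] at hψs
  omega

lemma Gfam_expMoreSuccinct {k : ℕ} {S : Type} [PartialOrder S] {xs ys : S → Fin k → Bool}
    (hx0 : ∀ s, xs s ≠ zpat k) (hy0 : ∀ s, ys s ≠ zpat k)
    (hxyne : ∀ s, xs s ≠ ys s)
    (hsep : ∀ s u : S, u ≠ s →
      ¬ ((xs s = xs u ∨ xs s = ys u) ∧ (ys s = xs u ∨ ys s = ys u)))
    {s t : S} (hst : ¬ s ≤ t) :
    ExpMoreSuccinct (boolSSFs (Gfam xs ys s)) (boolSSFs (Gfam xs ys t)) := by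
  refine ⟨fun i => phiSeq ⟨_, Gfam_mem_union xs ys s⟩ i, 1, 1, 2, one_lt_two, ?_, ?_⟩
  · intro i
    rw [phiSeq_size]
    omega
  · intro i ψ hequiv
    have hlow := Gfam_gap hx0 hy0 hxyne hsep hst i ψ hequiv
    have hcast : ((2 ^ i : ℕ) : ℝ) ≤ (ψ.size : ℝ) := Nat.cast_le.mpr hlow
    calc (2 : ℝ) ^ i = ((2 ^ i : ℕ) : ℝ) := by push_cast; ring
      _ ≤ _ := hcast

lemma statement0_main (S : Type) [Fintype S] [PartialOrder S] (hm2 : 2 ≤ Fintype.card S) :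
    ∃ F G : S → Set ((Fin (Nat.clog 2 (Fintype.card S + 1)) → Bool) → Bool),
      (∀ s t : S,
        (LeExpr (boolSSFs (F s)) (boolSSFs (F t)) ↔ s ≤ t) ∧
        (LePoly (boolSSFs (G s)) (boolSSFs (G t)) ↔ s ≤ t)) ∧
      (∀ s t : S, EquallyExpressive (boolSSFs (G s)) (boolSSFs (G t))) ∧
      (∀ s t : S, ¬ s ≤ t → ExpMoreSuccinct (boolSSFs (G s)) (boolSSFs (G t))) := by
  classical
  set m := Fintype.card S with hm
  set k := Nat.clog 2 (m + 1) with hk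
  have hpow : m + 1 ≤ 2 ^ k := Nat.le_pow_clog (by norm_num) _
  have hk3 : 3 ≤ 2 ^ k := by omega
  have hk2' : 2 ≤ k := by
    by_contra h
    push_neg at h
    have h1 : (2 : ℕ) ^ k ≤ 2 ^ 1 := Nat.pow_le_pow_right (by norm_num) (by omega)
    omega
  have h4 : 4 ≤ 2 ^ k := by
    calc (4 : ℕ) = 2 ^ 2 := rfl
      _ ≤ 2 ^ k := Nat.pow_le_pow_right (by norm_num) hk2'
  set N := 2 ^ k - 1 with hN
  have hN3 : 3 ≤ N := by omega
  haveI : NeZero N := ⟨by omega⟩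
  have cardP : Fintype.card {c : Fin k → Bool // c ≠ zpat k} = N := by
    have h1 : Fintype.card {c : Fin k → Bool // ¬ (c = zpat k)}
        = Fintype.card (Fin k → Bool) - Fintype.card {c : Fin k → Bool // c = zpat k} :=
      Fintype.card_subtype_compl _
    have h2 : Fintype.card {c : Fin k → Bool // c = zpat k} = 1 := Fintype.card_subtype_eq _
    have h3 : Fintype.card (Fin k → Bool) = 2 ^ k := by
      simp [Fintype.card_fun]
    rw [h2, h3] at h1
    rw [hN]
    exact h1
  have hcard1 : Fintype.card S ≤ Fintype.card (ZMod N) := by rw [ZMod.card]; omega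
  obtain ⟨em⟩ := Function.Embedding.nonempty_of_card_le hcard1
  have hcard2 : Fintype.card (ZMod N) = Fintype.card {c : Fin k → Bool // c ≠ zpat k} := by
    rw [ZMod.card, cardP]
  let e : ZMod N ≃ {c : Fin k → Bool // c ≠ zpat k} := Fintype.equivOfCardEq hcard2
  let xs : S → (Fin k → Bool) := fun s => (e (em s)).1
  let ys : S → (Fin k → Bool) := fun s => (e (em s + 1)).1
  have hx0 : ∀ s, xs s ≠ zpat k := fun s => (e (em s)).2
  have hy0 : ∀ s, ys s ≠ zpat k := fun s => (e (em s + 1)).2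
  have einj : ∀ a b : ZMod N, (e a).1 = (e b).1 → a = b :=
    fun a b h => e.injective (Subtype.ext h)
  have hone : (1 : ZMod N) ≠ 0 := by
    intro h
    have h1 : ((1 : ℕ) : ZMod N) = 0 := by exact_mod_cast h
    have h2 := (ZMod.natCast_eq_zero_iff 1 N).mp h1
    have := Nat.le_of_dvd (by norm_num) h2
    omega
  have htwo : (2 : ZMod N) ≠ 0 := by
    intro h
    have h1 : ((2 : ℕ) : ZMod N) = 0 := by exact_mod_cast h
    have h2 := (ZMod.natCast_eq_zero_iff 2 N).mp h1
    have := Nat.le_of_dvd (by norm_num) h2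
    omega
  have hxyne : ∀ s, xs s ≠ ys s := by
    intro s h
    have h1 := einj _ _ h
    exact hone (left_eq_add.mp h1)
  have hsep : ∀ s u : S, u ≠ s →
      ¬ ((xs s = xs u ∨ xs s = ys u) ∧ (ys s = xs u ∨ ys s = ys u)) := by
    rintro s u hne ⟨h1 | h1, h2 | h2⟩
    · exact hxyne s (h1.trans h2.symm)
    · exact hne (em.injective (einj _ _ h1)).symm
    · have g1 := einj _ _ h1
      have g2 := einj _ _ h2
      rw [g1, add_assoc, one_add_one_eq_two] at g2
      exact htwo (add_eq_left.mp g2)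
    · have g2 := einj _ _ h2
      have g3 : em s = em u := add_right_cancel g2
      exact hne (em.injective g3).symm
  have hxinj : ∀ s u : S, xs u = xs s → u = s :=
    fun s u h => em.injective (einj _ _ h)
  refine ⟨Ffam xs, Gfam xs ys, fun s t => ⟨?_, ?_⟩, fun s t =>
    ⟨Gfam_leExpr hx0 hy0 s t, Gfam_leExpr hx0 hy0 t s⟩,
    fun s t hst => Gfam_expMoreSuccinct hx0 hy0 hxyne hsep hst⟩
  · constructor
    · intro hle
      by_contra hst
      exact Ffam_not_leExpr hx0 hxinj hst hle
    · intro hst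
      exact Ffam_leExpr xs hst
  · constructor
    · intro hlp
      by_contra hst
      exact Gfam_not_lePoly hx0 hy0 hxyne hsep hst hlp
    · intro hst
      exact Gfam_lePoly xs ys hst

end Aux7
/-- the succinctness- and expressiveness relationships between modal logics
defined by sets of `k`-ary Boolean functions (`k = ⌈log₂(|S|+1)⌉`) can be as complex as any
finite partial order. -/
theorem statement0 (S : Type) [Fintype S] [PartialOrder S] :
    ∃ F G : S → Set ((Fin (Nat.clog 2 (Fintype.card S + 1)) → Bool) → Bool),
      (∀ s t : S,
        (LeExpr (boolSSFs (F s)) (boolSSFs (F t)) ↔ s ≤ t) ∧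
        (LePoly (boolSSFs (G s)) (boolSSFs (G t)) ↔ s ≤ t)) ∧
      (∀ s t : S, EquallyExpressive (boolSSFs (G s)) (boolSSFs (G t))) ∧
      (∀ s t : S, ¬ s ≤ t → ExpMoreSuccinct (boolSSFs (G s)) (boolSSFs (G t))) := by
  classical
  by_cases hm2 : 2 ≤ Fintype.card S
  · exact statement0_main S hm2
  · push_neg at hm2
    have hsub : Subsingleton S := Fintype.card_le_one_iff_subsingleton.mp (by omega)
    have hle : ∀ s t : S, s ≤ t := fun s t => le_of_eq (Subsingleton.elim s t)
    refine ⟨fun _ => ∅, fun _ => ∅, fun s t => ⟨?_, ?_⟩,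
      fun s t => ⟨leExpr_of_subset subset_rfl, leExpr_of_subset subset_rfl⟩,
      fun s t hst => absurd (hle s t) hst⟩
    · exact iff_of_true (leExpr_of_subset subset_rfl) (hle s t)
    · exact iff_of_true (lePoly_of_subset subset_rfl) (hle s t)
end

section
/- For every set 𝒪 of successor selection functions, every k ∈ ℕ, and all classes 𝔸, 𝔹 of pointed models: Spoiler wins the formula size game FSG(𝒪) starting with ⟨𝔸∘𝔹⟩ in k moves if and only if there is a formula φ ∈ ML⁺(𝒪) with |φ| = k such that 𝔸 ⊨ φ and 𝔹 ⊨ ¬φ. -/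
set_option autoImplicit false
attribute [local instance] Classical.propDecidable

lemma tree_to_formula {n : ℕ} {Os : Set (SSF n)} :
    ∀ {C D : Set (PointedModel n)} (T : GameTree Os C D),
      ∃ φ : MLFormula Os, φ.size = gameTreeSize C D T ∧
        (∀ q ∈ C, Satisfies q.M q.w φ) ∧ (∀ q ∈ D, ¬ Satisfies q.M q.w φ) := by
  intro C D T
  induction T with
  | atom p C D hC hD =>
      exact ⟨.var p, rfl, hC, hD⟩
  | not C D t ih =>
      obtain ⟨φ, hs, h1, h2⟩ := ih
      exact ⟨.neg φ, by simp [MLFormula.size, gameTreeSize, hs],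
        fun q hq => h2 q hq, fun q hq h => h (h1 q hq)⟩
  | or C₁ C₂ D t₁ t₂ ih₁ ih₂ =>
      obtain ⟨φ₁, hs₁, h1, h2⟩ := ih₁
      obtain ⟨φ₂, hs₂, h3, h4⟩ := ih₂
      refine ⟨.or φ₁ φ₂, by simp [MLFormula.size, gameTreeSize, hs₁, hs₂], ?_, ?_⟩
      · rintro q (hq | hq)
        · exact Or.inl (h1 q hq)
        · exact Or.inr (h3 q hq)
      · rintro q hq (h | h)
        · exact h2 q hq h
        · exact h4 q hq h
  | box O hO C D D₁ hD t ih =>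
      obtain ⟨φ, hs, h1, h2⟩ := ih
      refine ⟨.box ⟨O, hO⟩ φ, by simp [MLFormula.size, gameTreeSize, hs], ?_, ?_⟩
      · intro q hq w' hw'
        exact h1 ⟨q.M, w'⟩ ⟨q, hq, w', hw', rfl⟩
      · intro q hq h
        obtain ⟨w', hw', hw1⟩ := hD q hq
        exact h2 ⟨q.M, w'⟩ hw1 (h w' hw')

lemma formula_to_tree {n : ℕ} {Os : Set (SSF n)} :
    ∀ (φ : MLFormula Os) (A B : Set (PointedModel n)),
      (∀ q ∈ A, Satisfies q.M q.w φ) → (∀ q ∈ B, ¬ Satisfies q.M q.w φ) →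
      ∃ T : GameTree Os A B, gameTreeSize A B T = φ.size := by
  intro φ
  induction φ with
  | var p =>
      intro A B hA hB
      exact ⟨.atom p A B hA hB, rfl⟩
  | neg φ ih =>
      intro A B hA hB
      obtain ⟨T, hT⟩ := ih B A (fun q hq => not_not.mp (hB q hq)) (fun q hq => hA q hq)
      exact ⟨.not A B T, by simp [gameTreeSize, hT, MLFormula.size]⟩
  | or φ₁ φ₂ ih₁ ih₂ =>
      intro A B hA hB
      set A₁ : Set (PointedModel n) := {q ∈ A | Satisfies q.M q.w φ₁}
      set A₂ : Set (PointedModel n) := {q ∈ A | Satisfies q.M q.w φ₂}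
      obtain ⟨T₁, hT₁⟩ := ih₁ A₁ B (fun q hq => hq.2) (fun q hq h => hB q hq (Or.inl h))
      obtain ⟨T₂, hT₂⟩ := ih₂ A₂ B (fun q hq => hq.2) (fun q hq h => hB q hq (Or.inr h))
      have hU : A₁ ∪ A₂ = A := by
        apply Set.eq_of_subset_of_subset
        · rintro q (hq | hq) <;> exact hq.1
        · intro q hq
          rcases hA q hq with h | h
          · exact Or.inl ⟨hq, h⟩
          · exact Or.inr ⟨hq, h⟩
      rw [← hU]
      exact ⟨.or A₁ A₂ B T₁ T₂, by simp [gameTreeSize, hT₁, hT₂, MLFormula.size]⟩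
  | box O φ ih =>
      intro A B hA hB
      set D₁ : Set (PointedModel n) :=
        {m | m ∈ boxImage O.val B ∧ ¬ Satisfies m.M m.w φ}
      have hD : ∀ q ∈ B, ∃ w' ∈ O.val q.M q.w, (⟨q.M, w'⟩ : PointedModel n) ∈ D₁ := by
        intro q hq
        have := hB q hq
        simp only [Satisfies, not_forall] at this
        obtain ⟨w', hw', hns⟩ := this
        exact ⟨w', hw', ⟨q, hq, w', hw', rfl⟩, hns⟩
      obtain ⟨T, hT⟩ := ih (boxImage O.val A) D₁
        (by rintro q ⟨m, hm, w', hw', rfl⟩; exact hA m hm w' hw')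
        (fun q hq => hq.2)
      exact ⟨.box O.val O.property A B D₁ hD T, by simp [gameTreeSize, hT, MLFormula.size]⟩

/-- formula size game theorem: Spoiler wins the FSG(𝒪) starting with
`⟨𝔸∘𝔹⟩` in `k` moves (i.e. there is a closed game tree with root `⟨𝔸∘𝔹⟩` and exactly `k`
nodes) iff there is an `ML⁺(𝒪)`-formula `φ` with `|φ| = k`, `𝔸 ⊨ φ` and `𝔹 ⊨ ¬φ`. -/
theorem statement2 {n : ℕ} (Os : Set (SSF n)) (k : ℕ) (A B : Set (PointedModel n)) :
    (∃ T : GameTree Os A B, gameTreeSize A B T = k) ↔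
      ∃ φ : MLFormula Os, φ.size = k ∧
        (∀ q ∈ A, Satisfies q.M q.w φ) ∧ (∀ q ∈ B, ¬ Satisfies q.M q.w φ) := by
  constructor
  · rintro ⟨T, rfl⟩
    obtain ⟨φ, hs, h1, h2⟩ := tree_to_formula T
    exact ⟨φ, hs, h1, h2⟩
  · rintro ⟨φ, rfl, h1, h2⟩
    exact formula_to_tree φ A B h1 h2
end

section
/- Let ℱ and 𝒢 be sets of n-ary Boolean functions. Then ML⁺(𝒢) ≤_expr ML⁺(ℱ) if and only if for each g ∈ 𝒢 there is a set S ⊆ ℱ such that g is logically equivalent to the disjunction ⋁_{f∈S} f. -/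
set_option autoImplicit false
attribute [local instance] Classical.propDecidable

section Statement4Aux

variable {n : ℕ}

/-- Finite conjunction of formulas. -/
def myConj {Os : Set (SSF n)} : List (MLFormula Os) → MLFormula Os
  | [] => .or (.var 0) (.neg (.var 0))
  | a :: l => .neg (.or (.neg a) (.neg (myConj l)))

lemma satisfies_myConj {Os : Set (SSF n)} (M : KripkeModel n) (w : M.W) :
    ∀ L : List (MLFormula Os), Satisfies M w (myConj L) ↔ ∀ φ ∈ L, Satisfies M w φ
  | [] => by
      simp only [myConj, Satisfies, List.not_mem_nil, false_implies, implies_true, iff_true]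
      tauto
  | a :: l => by
      simp only [myConj, Satisfies, List.mem_cons, satisfies_myConj M w l]
      constructor
      · intro h φ hφ
        rcases hφ with rfl | hφ
        · by_contra hc; exact h (Or.inl hc)
        · by_contra hc
          exact h (Or.inr (fun hall => hc (hall φ hφ)))
      · intro h hc
        rcases hc with hc | hc
        · exact hc (h a (Or.inl rfl))
        · exact hc (fun φ hφ => h φ (Or.inr hφ))

lemma mem_OfBool {M : KripkeModel n} {f : (Fin n → Bool) → Bool} {w w' : M.W} :
    w' ∈ OfBool f M w ↔ f (fun j => decide (M.R j w w')) = true := Iff.rfl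

/-- Bisimulation invariance of `ML⁺(𝒪)` formulas. -/
lemma bisim_invariance {Os : Set (SSF n)} {M₁ M₂ : KripkeModel n} {Z : M₁.W → M₂.W → Prop}
    (h : IsOBisim Os M₁ M₂ Z) :
    ∀ (φ : MLFormula Os) (w₁ : M₁.W) (w₂ : M₂.W), Z w₁ w₂ →
      (Satisfies M₁ w₁ φ ↔ Satisfies M₂ w₂ φ)
  | .var p, w₁, w₂, hZ => (h w₁ w₂ hZ).1 p
  | .neg φ, w₁, w₂, hZ => by
      simp only [Satisfies]
      exact not_congr (bisim_invariance h φ w₁ w₂ hZ)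
  | .or φ ψ, w₁, w₂, hZ => by
      simp only [Satisfies]
      exact or_congr (bisim_invariance h φ w₁ w₂ hZ) (bisim_invariance h ψ w₁ w₂ hZ)
  | .box O φ, w₁, w₂, hZ => by
      obtain ⟨_, hforth, hback⟩ := h w₁ w₂ hZ
      simp only [Satisfies]
      constructor
      · intro hs w₂' hw₂'
        obtain ⟨w₁', hw₁', hZ'⟩ := hback O.val O.property w₂' hw₂'
        exact (bisim_invariance h φ w₁' w₂' hZ').1 (hs w₁' hw₁')
      · intro hs w₁' hw₁'
        obtain ⟨w₂', hw₂', hZ'⟩ := hforth O.val O.property w₁' hw₁'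
        exact (bisim_invariance h φ w₁' w₂' hZ').2 (hs w₂' hw₂')

/-- The simple model used in the hardness direction: a root (`none`), a successor `u_y`
for each `y ∈ U` reachable by the edge pattern `y`, full edges from the `u`-worlds,
and every variable true exactly at the root. -/
def simpleModel (U : Set (Fin n → Bool)) : KripkeModel n where
  W := Option {y : Fin n → Bool // y ∈ U}
  nonempty := ⟨none⟩
  R := fun i x y =>
    match x, y with
    | none, none => False
    | none, some v => v.val i = true
    | some _, _ => True
  val := fun _ => {x | x = none}

lemma pat_none_none (U : Set (Fin n → Bool)) :
    (fun j : Fin n => decide ((simpleModel U).R j none none)) = fun _ => false := by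
  funext j
  exact decide_eq_false (fun h => h)

lemma pat_none_some (U : Set (Fin n → Bool)) (v : {y : Fin n → Bool // y ∈ U}) :
    (fun j : Fin n => decide ((simpleModel U).R j none (some v))) = v.val := by
  funext j
  cases hb : v.val j with
  | false => exact decide_eq_false (fun h => by rw [show (simpleModel U).R j none (some v) = (v.val j = true) from rfl] at h; rw [hb] at h; exact Bool.false_ne_true h)
  | true => exact decide_eq_true hb

lemma pat_some (U : Set (Fin n → Bool)) (a : {y : Fin n → Bool // y ∈ U})
    (y : (simpleModel U).W) :
    (fun j : Fin n => decide ((simpleModel U).R j (some a) y)) = fun _ => true := by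
  funext j
  exact decide_eq_true (by cases y <;> trivial)

end Statement4Aux

/-- `ML⁺(𝒢) ≤_expr ML⁺(ℱ)` iff every `g ∈ 𝒢` is logically equivalent to a
disjunction of functions from a subset of `ℱ` (the empty disjunction being constant 0). -/
theorem statement4 {n : ℕ} (F G : Set ((Fin n → Bool) → Bool)) :
    LeExpr (boolSSFs G) (boolSSFs F) ↔
      ∀ g ∈ G, ∃ S ⊆ F, ∀ x : Fin n → Bool, (g x = true ↔ ∃ f ∈ S, f x = true) := by
  constructor
  · -- expressivity implies the Boolean covering condition
    intro hle g hg
    refine ⟨{f ∈ F | ∀ x, f x = true → g x = true}, fun f hf => hf.1, ?_⟩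
    have key : ∀ x, g x = true → ∃ f ∈ {f ∈ F | ∀ x, f x = true → g x = true}, f x = true := by
      by_contra hx
      push_neg at hx
      obtain ⟨x₀, hgx₀, hS₀⟩ := hx
      have hF : ∀ f ∈ F, f x₀ = true → ∃ y, f y = true ∧ g y = false := by
        intro f hf hfx
        by_contra hy
        push_neg at hy
        have hfS : f ∈ {f ∈ F | ∀ x, f x = true → g x = true} := by
          refine ⟨hf, fun y h => ?_⟩
          have := hy y h
          cases hgy : g y with
          | false => exact absurd hgy this
          | true => rfl
        exact (hS₀ f hfS) hfx
      -- the two models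
      set U₁ : Set (Fin n → Bool) := {y | g y = false} with hU₁
      set U₂ : Set (Fin n → Bool) := {y | g y = false} ∪ {x₀} with hU₂
      set M₁ := simpleModel U₁ with hM₁
      set M₂ := simpleModel U₂ with hM₂
      set Z : M₁.W → M₂.W → Prop :=
        fun a b => (a = none ∧ b = none) ∨ (a ≠ none ∧ b ≠ none) with hZdef
      have hbis : IsOBisim (boolSSFs F) M₁ M₂ Z := by
        intro w₁ w₂ hZ
        rcases hZ with ⟨rfl, rfl⟩ | ⟨h₁, h₂⟩
        · -- roots
          refine ⟨fun p => ⟨fun _ => rfl, fun _ => rfl⟩, ?_, ?_⟩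
          · intro O hO w₁' hw₁'
            obtain ⟨f, hfF, rfl⟩ := hO
            erw [mem_OfBool] at hw₁'
            cases w₁' with
            | none =>
              refine ⟨none, ?_, Or.inl ⟨rfl, rfl⟩⟩
              erw [mem_OfBool, pat_none_none]
              rw [pat_none_none] at hw₁'
              exact hw₁'
            | some v =>
              refine ⟨some ⟨v.val, Or.inl v.property⟩, ?_, Or.inr ⟨Option.some_ne_none _, Option.some_ne_none _⟩⟩
              erw [mem_OfBool, pat_none_some]
              rw [pat_none_some] at hw₁'
              exact hw₁'
          · intro O hO w₂' hw₂'
            obtain ⟨f, hfF, rfl⟩ := hO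
            erw [mem_OfBool] at hw₂'
            cases w₂' with
            | none =>
              refine ⟨none, ?_, Or.inl ⟨rfl, rfl⟩⟩
              erw [mem_OfBool, pat_none_none]
              rw [pat_none_none] at hw₂'
              exact hw₂'
            | some v =>
              rw [pat_none_some] at hw₂'
              rcases v.property with hv | hv
              · refine ⟨some ⟨v.val, hv⟩, ?_, Or.inr ⟨Option.some_ne_none _, Option.some_ne_none _⟩⟩
                erw [mem_OfBool, pat_none_some]
                exact hw₂'
              · have hx : v.val = x₀ := hv
                obtain ⟨y, hfy, hgy⟩ := hF f hfF (by rw [← hx]; exact hw₂')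
                refine ⟨some ⟨y, hgy⟩, ?_, Or.inr ⟨Option.some_ne_none _, Option.some_ne_none _⟩⟩
                erw [mem_OfBool, pat_none_some]
                exact hfy
        · -- non-root worlds
          obtain ⟨a, rfl⟩ := Option.ne_none_iff_exists'.1 h₁
          obtain ⟨b, rfl⟩ := Option.ne_none_iff_exists'.1 h₂
          refine ⟨fun p => iff_of_false (Option.some_ne_none _) (Option.some_ne_none _), ?_, ?_⟩
          · intro O hO w₁' hw₁'
            obtain ⟨f, hfF, rfl⟩ := hO
            erw [mem_OfBool, pat_some] at hw₁'
            cases w₁' with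
            | none =>
              refine ⟨none, ?_, Or.inl ⟨rfl, rfl⟩⟩
              erw [mem_OfBool, pat_some]; exact hw₁'
            | some v =>
              refine ⟨some b, ?_, Or.inr ⟨Option.some_ne_none _, Option.some_ne_none _⟩⟩
              erw [mem_OfBool, pat_some]; exact hw₁'
          · intro O hO w₂' hw₂'
            obtain ⟨f, hfF, rfl⟩ := hO
            erw [mem_OfBool, pat_some] at hw₂'
            cases w₂' with
            | none =>
              refine ⟨none, ?_, Or.inl ⟨rfl, rfl⟩⟩
              erw [mem_OfBool, pat_some]; exact hw₂'
            | some v =>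
              refine ⟨some a, ?_, Or.inr ⟨Option.some_ne_none _, Option.some_ne_none _⟩⟩
              erw [mem_OfBool, pat_some]; exact hw₂'
      -- the distinguishing formula [O_g] p
      set φ : MLFormula (boolSSFs G) :=
        .box ⟨OfBool g, ⟨g, hg, rfl⟩⟩ (.var 0) with hφdef
      obtain ⟨ψ, hψ⟩ := hle φ
      have h1 : Satisfies M₁ none φ := by
        rw [hφdef]
        simp only [Satisfies]
        intro w' hw'
        erw [mem_OfBool] at hw'
        cases w' with
        | none => exact rfl
        | some v =>
          rw [pat_none_some] at hw'
          exact absurd hw' (by rw [show g v.val = false from v.property]; exact Bool.false_ne_true)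
      have h2 : ¬ Satisfies M₂ none φ := by
        rw [hφdef]
        simp only [Satisfies]
        intro hc
        have := hc (some ⟨x₀, Or.inr rfl⟩) (by erw [mem_OfBool, pat_none_some]; exact hgx₀)
        exact Option.some_ne_none _ this
      have hinv := bisim_invariance hbis ψ none none (Or.inl ⟨rfl, rfl⟩)
      exact h2 ((hψ M₂ none).2 (hinv.1 ((hψ M₁ none).1 h1)))
    intro x
    constructor
    · exact key x
    · rintro ⟨f, hf, hfx⟩
      exact hf.2 x hfx
  · -- covering condition implies expressivity
    intro h φ
    induction φ with
    | var p => exact ⟨.var p, fun M w => Iff.rfl⟩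
    | neg φ ih =>
      obtain ⟨ψ, hψ⟩ := ih
      exact ⟨.neg ψ, fun M w => not_congr (hψ M w)⟩
    | or φ₁ φ₂ ih₁ ih₂ =>
      obtain ⟨ψ₁, hψ₁⟩ := ih₁
      obtain ⟨ψ₂, hψ₂⟩ := ih₂
      exact ⟨.or ψ₁ ψ₂, fun M w => or_congr (hψ₁ M w) (hψ₂ M w)⟩
    | box O χ ih =>
      obtain ⟨ψ, hψ⟩ := ih
      obtain ⟨g, hg, hOg⟩ := O.property
      obtain ⟨S, hSF, hS⟩ := h g hg
      have hfin : S.Finite := Set.toFinite S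
      have hL : ∀ f, f ∈ hfin.toFinset.toList ↔ f ∈ S := by
        intro f
        rw [Finset.mem_toList, Set.Finite.mem_toFinset]
      refine ⟨myConj (hfin.toFinset.toList.attach.map
        (fun f => .box ⟨OfBool f.val, ⟨f.val, hSF ((hL f.val).1 f.property), rfl⟩⟩ ψ)), ?_⟩
      intro M w
      rw [satisfies_myConj]
      have hmem : ∀ w' : M.W, w' ∈ O.val M w ↔ g (fun j => decide (M.R j w w')) = true := by
        intro w'
        rw [← hOg]
        exact mem_OfBool
      constructor
      · intro hb θ hθ
        simp only [List.mem_map] at hθ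
        obtain ⟨⟨f, hfL⟩, -, rfl⟩ := hθ
        simp only [Satisfies]
        intro w' hw'
        rw [mem_OfBool] at hw'
        have hgw : w' ∈ O.val M w := by
          rw [hmem w']
          exact (hS _).2 ⟨f, (hL f).1 hfL, hw'⟩
        exact (hψ M w').1 (hb w' hgw)
      · intro hb w' hw'
        rw [hmem w'] at hw'
        obtain ⟨f, hfS, hfr⟩ := (hS _).1 hw'
        have hθ : Satisfies M w
            (MLFormula.box ⟨OfBool f, ⟨f, hSF hfS, rfl⟩⟩ ψ : MLFormula (boolSSFs F)) := by
          apply hb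
          simp only [List.mem_map]
          exact ⟨⟨f, (hL f).2 hfS⟩, List.mem_attach _ _, rfl⟩
        exact (hψ M w').2 (hθ w' hfr)
end

section
/- Let I ⊆ ℕ and let ℓ ∈ ℕ with ℓ ∉ I. Then there is no formula φ ∈ ML_A(I) that is equivalent to [A_ℓ]p. -/
set_option autoImplicit false
attribute [local instance] Classical.propDecidable

set_option linter.unnecessarySimpa false

/-! ### Auxiliary construction for Statement 7 -/

/-- Worlds of the counterexample models: (depth, last letter, break parity). -/
abbrev Wrld : Type := ℕ × Fin 2 × Bool

/-- Deterministic transition: increase depth, record letter, update break parity. -/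
def stepW (j : Fin 2) (w : Wrld) : Wrld :=
  (w.1 + 1, j, if w.1 ≠ 0 ∧ j = w.2.1 then !w.2.2 else w.2.2)

/-- Run a word from a world. -/
def runW (s : List (Fin 2)) (w : Wrld) : Wrld := s.foldl (fun w j => stepW j w) w

/-- The two counterexample models (differing only in the valuation at depth `ℓ`). -/
def Mdl (b : Bool) (ℓ : ℕ) : KripkeModel 2 where
  W := Wrld
  nonempty := ⟨(0, 0, false)⟩
  R := fun j w w' => w' = stepW j w
  val := fun k => {w | k = 0 → w.1 = ℓ → w.2.2 = b}

lemma runW_append_single (s : List (Fin 2)) (j : Fin 2) (w : Wrld) :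
    runW (s ++ [j]) w = stepW j (runW s w) := by
  simp [runW]

lemma sSucc_runW (b : Bool) (ℓ : ℕ) (s : List (Fin 2)) (w w' : Wrld) :
    sSucc (Mdl b ℓ) s w w' ↔ w' = runW s w := by
  induction s generalizing w with
  | nil => exact Iff.rfl
  | cons a s ih =>
    show (∃ u : Wrld, (u = stepW a w) ∧ sSucc (Mdl b ℓ) s u w') ↔ _
    simp only [exists_eq_left, ih]
    rfl

lemma altWord_one (c : Fin 2) : altWord c 1 = [c] := by
  simp [altWord, List.range_succ, altLetter]

lemma altWord_succ (c : Fin 2) (m : ℕ) :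
    altWord c (m + 1) = altWord c m ++ [altLetter c m] := by
  simp [altWord, List.range_succ]

lemma fin2_add_one_ne (x : Fin 2) : x + 1 ≠ x := by
  fin_cases x <;> decide

lemma altLetter_succ_ne (c : Fin 2) (k : ℕ) : altLetter c (k + 1) ≠ altLetter c k := by
  unfold altLetter
  rcases Nat.mod_two_eq_zero_or_one k with h | h
  · have h' : (k + 1) % 2 = 1 := by omega
    rw [h, h']
    simpa using fun hc => fin2_add_one_ne c hc
  · have h' : (k + 1) % 2 = 0 := by omega
    rw [h, h']
    simpa using fun hc => fin2_add_one_ne c hc.symm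

lemma runW_altWord (c : Fin 2) (m : ℕ) (hm : 1 ≤ m) (w : Wrld) :
    runW (altWord c m) w =
      (w.1 + m, altLetter c (m - 1),
        if w.1 ≠ 0 ∧ c = w.2.1 then !w.2.2 else w.2.2) := by
  induction m with
  | zero => omega
  | succ n ih =>
    rcases Nat.eq_zero_or_pos n with rfl | hn
    · rw [altWord_one]
      show stepW c w = _
      simp [stepW, altLetter]
    · rw [altWord_succ, runW_append_single, ih hn]
      have hne : altLetter c n ≠ altLetter c (n - 1) := by
        have hrw : n - 1 + 1 = n := by omega
        rw [← hrw]
        exact altLetter_succ_ne c (n - 1)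
      show stepW _ _ = _
      simp only [stepW, hne, and_false, if_false]
      have : w.1 + n + 1 = w.1 + (n + 1) := by omega
      rw [this]
      rfl

lemma mem_ofLang_alt (b : Bool) (ℓ m : ℕ) (w w' : Wrld) :
    w' ∈ OfLang (altLang m) (Mdl b ℓ) w ↔ ∃ c : Fin 2, w' = runW (altWord c m) w := by
  constructor
  · rintro ⟨s, hs, hsucc⟩
    rw [sSucc_runW] at hsucc
    rcases hs with h | h
    · exact ⟨0, by rw [hsucc, h]⟩
    · exact ⟨1, by rw [hsucc, h]⟩
  · rintro ⟨c, rfl⟩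
    have hc : c = 0 ∨ c = 1 := by omega
    rcases hc with rfl | rfl
    · exact ⟨altWord 0 m, Or.inl rfl, (sSucc_runW b ℓ _ w _).2 rfl⟩
    · exact ⟨altWord 1 m, Or.inr rfl, (sSucc_runW b ℓ _ w _).2 rfl⟩

/-- The bisimulation relation: equal depth, and opposite break parity at depth `ℓ`. -/
def ZZ (ℓ : ℕ) (w v : Wrld) : Prop := w.1 = v.1 ∧ (w.1 = ℓ → w.2.2 = !v.2.2)

lemma zz_symm {ℓ : ℕ} {w v : Wrld} (h : ZZ ℓ w v) : ZZ ℓ v w := by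
  refine ⟨h.1.symm, fun hd => ?_⟩
  have hw : w.1 = ℓ := h.1.trans hd
  have := h.2 hw
  cases hb : v.2.2 <;> cases hb' : w.2.2 <;> simp_all

lemma zz_step {ℓ : ℕ} {w v : Wrld} (m : ℕ) (hm : 1 ≤ m)
    (hne : w.1 + m = ℓ → w.1 ≠ 0) (h : ZZ ℓ w v) (c : Fin 2) :
    ∃ c' : Fin 2, ZZ ℓ (runW (altWord c m) w) (runW (altWord c' m) v) := by
  by_cases hd : w.1 + m = ℓ
  · have hw0 : w.1 ≠ 0 := hne hd
    have hv0 : v.1 ≠ 0 := h.1 ▸ hw0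
    set P : Bool := if w.1 ≠ 0 ∧ c = w.2.1 then !w.2.2 else w.2.2 with hP
    refine ⟨if P = !v.2.2 then v.2.1 + 1 else v.2.1, ?_⟩
    rw [runW_altWord c m hm, runW_altWord _ m hm]
    refine ⟨by rw [h.1], fun _ => ?_⟩
    show P = !(if v.1 ≠ 0 ∧ (if P = !v.2.2 then v.2.1 + 1 else v.2.1) = v.2.1
      then !v.2.2 else v.2.2)
    by_cases hPv : P = !v.2.2
    · rw [if_pos hPv, if_neg (fun hcon => fin2_add_one_ne v.2.1 hcon.2), hPv]
    · have hPv' : P = v.2.2 := by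
        cases hb : P <;> cases hb' : v.2.2 <;> simp_all
      rw [if_neg hPv, if_pos ⟨hv0, rfl⟩, Bool.not_not, hPv']
  · refine ⟨c, ?_⟩
    rw [runW_altWord c m hm, runW_altWord c m hm]
    exact ⟨by rw [h.1], fun hcon => absurd hcon hd⟩

lemma bisim_equiv (I : Set ℕ) (hI : ∀ m ∈ I, 1 ≤ m) (ℓ : ℕ) (hnot : ℓ ∉ I) :
    ∀ (φ : MLFormula (MLA_ops I)) (w v : Wrld), ZZ ℓ w v →
      (Satisfies (Mdl false ℓ) w φ ↔ Satisfies (Mdl true ℓ) v φ) := by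
  intro φ
  induction φ with
  | var k =>
    intro w v hz
    show (k = 0 → w.1 = ℓ → w.2.2 = false) ↔ (k = 0 → v.1 = ℓ → v.2.2 = true)
    constructor
    · intro h hk hd
      have hw : w.1 = ℓ := hz.1.trans hd
      have h1 := hz.2 hw
      have h2 := h hk hw
      cases hb : v.2.2 <;> simp_all
    · intro h hk hd
      have hv : v.1 = ℓ := hz.1.symm.trans hd
      have h1 := hz.2 hd
      have h2 := h hk hv
      cases hb : w.2.2 <;> simp_all
  | neg φ ih =>
    intro w v hz
    exact not_congr (ih w v hz)
  | or φ ψ ih1 ih2 =>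
    intro w v hz
    exact or_congr (ih1 w v hz) (ih2 w v hz)
  | box O φ ih =>
    intro w v hz
    obtain ⟨m, hmI, hOm⟩ := O.2
    have hm1 : 1 ≤ m := hI m hmI
    have hmne : ∀ x : Wrld, x.1 + m = ℓ → x.1 ≠ 0 := by
      intro x hsum h0
      apply hnot
      rw [← hsum, h0, zero_add]
      exact hmI
    show (∀ w' ∈ O.val (Mdl false ℓ) w, Satisfies (Mdl false ℓ) w' φ) ↔
      (∀ v' ∈ O.val (Mdl true ℓ) v, Satisfies (Mdl true ℓ) v' φ)
    constructor
    · intro hall v' hv'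
      rw [← hOm] at hv'; replace hv' := (mem_ofLang_alt true ℓ m v v').1 hv'
      obtain ⟨c, rfl⟩ := hv'
      obtain ⟨c', hzz⟩ := zz_step m hm1 (hmne v) (zz_symm hz) c
      have hw' : runW (altWord c' m) w ∈ O.val (Mdl false ℓ) w := by
        rw [← hOm]; exact (mem_ofLang_alt false ℓ m w _).2 ⟨c', rfl⟩
      exact (ih _ _ (zz_symm hzz)).1 (hall _ hw')
    · intro hall w' hw'
      rw [← hOm] at hw'; replace hw' := (mem_ofLang_alt false ℓ m w w').1 hw'
      obtain ⟨c, rfl⟩ := hw'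
      obtain ⟨c', hzz⟩ := zz_step m hm1 (hmne w) hz c
      have hv' : runW (altWord c' m) v ∈ O.val (Mdl true ℓ) v := by
        rw [← hOm]; exact (mem_ofLang_alt true ℓ m v _).2 ⟨c', rfl⟩
      exact (ih _ _ hzz).2 (hall _ hv')

/-- if `ℓ ∉ I`, then no `ML_A(I)`-formula is equivalent to `[A_ℓ]p`. -/
theorem statement7 (I : Set ℕ) (hI : ∀ m ∈ I, 1 ≤ m) (ℓ : ℕ) (hℓ : 1 ≤ ℓ)
    (hnot : ℓ ∉ I) :
    ¬ ∃ φ : MLFormula (MLA_ops I), FEquiv φ (boxAltIter ℓ 1) := by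
  rintro ⟨φ, hφ⟩
  have h1 : Satisfies (Mdl false ℓ) ((0, 0, false) : Wrld) (boxAltIter ℓ 1) := by
    show ∀ w' ∈ OfLang (altLang ℓ) (Mdl false ℓ) ((0, 0, false) : Wrld),
      Satisfies (Mdl false ℓ) w' (boxAltIter ℓ 0)
    intro w' hw'
    replace hw' := (mem_ofLang_alt false ℓ ℓ _ w').1 hw'
    obtain ⟨c, rfl⟩ := hw'
    rw [runW_altWord c ℓ hℓ]
    intro _ _
    simp
  have h2 : ¬ Satisfies (Mdl true ℓ) ((0, 0, false) : Wrld) (boxAltIter ℓ 1) := by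
    intro hall
    have hmem : runW (altWord 0 ℓ) ((0, 0, false) : Wrld) ∈
        OfLang (altLang ℓ) (Mdl true ℓ) ((0, 0, false) : Wrld) := by
      rw [mem_ofLang_alt]; exact ⟨0, rfl⟩
    have hx := hall _ hmem
    rw [runW_altWord 0 ℓ hℓ] at hx
    have := hx rfl (by simp)
    simp at this
  have hzroot : ZZ ℓ ((0, 0, false) : Wrld) ((0, 0, false) : Wrld) :=
    ⟨rfl, fun h => absurd h (by simp; omega)⟩
  have heq := bisim_equiv I hI ℓ hnot φ _ _ hzroot
  have a1 : Satisfies (Mdl false ℓ) ((0, 0, false) : Wrld) φ :=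
    (hφ (Mdl false ℓ) _).2 h1
  exact h2 ((hφ (Mdl true ℓ) _).1 (heq.1 a1))
end
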